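/- Let f : {0,1}ⁿ → ℝ satisfy condition (2.4) with constant v > 0, and let B = max over x ∈ {0,1}ⁿ and 1 ≤ i ≤ n of |f(x) − f(x^{(i)})|. Then for all real numbers b > a ≥ Mf (the median of f(X)) with P{f(X) ≥ b} > 0, one has b − a ≤ sqrt( (72/5)·v·P{f(X) ∈ (a − B, b)} / P{f(X) ≥ b} ) · ( log( e² / (2·P{f(X) ∈ (a − B, b)}) ) )^{−1/2}. -/

import Mathlib

open scoped Classical
open Finset

/-- Probability of an event under the uniform distribution on `{0,1}ⁿ`. -/
noncomputable def prb {n : ℕ} (P : (Fin n → Fin 2) → Prop) : ℝ :=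
  ((Finset.univ.filter P).card : ℝ) / 2 ^ n

/-- `x^{(i)}`: flip the `i`-th bit of `x`. -/
noncomputable def flipBit {n : ℕ} (x : Fin n → Fin 2) (i : Fin n) : Fin n → Fin 2 :=
  Function.update x i (x i + 1)

/-- The `α`-quantile `Q_α = inf { z : P{f(X) ≤ z} ≥ α }`. -/
noncomputable def quant {n : ℕ} (f : (Fin n → Fin 2) → ℝ) (α : ℝ) : ℝ :=
  sInf {z : ℝ | α ≤ prb fun x => f x ≤ z}

/-- Expectation of `f(X)` for `X` uniform on `{0,1}ⁿ`. -/
noncomputable def expecb {n : ℕ} (f : (Fin n → Fin 2) → ℝ) : ℝ :=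
  (∑ x, f x) / 2 ^ n

/-- Variance of `f(X)` for `X` uniform on `{0,1}ⁿ`. -/
noncomputable def varb {n : ℕ} (f : (Fin n → Fin 2) → ℝ) : ℝ :=
  expecb fun x => (f x - expecb f) ^ 2



open Finset

namespace StmtAux

/-- `1 - 1/t ≤ log t` for `t > 0`. -/
lemma one_sub_inv_le_log {t : ℝ} (ht : 0 < t) : 1 - 1/t ≤ Real.log t := by
  have h := Real.log_le_sub_one_of_pos (x := 1/t) (by positivity)
  rw [Real.log_div one_ne_zero (ne_of_gt ht), Real.log_one] at h
  nlinarith [h]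

/-- Cauchy–Schwarz corollary: `(√(Σu²) − √(Σw²))² ≤ Σ(u−w)²`. -/
lemma sqrt_sub_sqrt_sq_le {ι : Type*} (s : Finset ι) (u w : ι → ℝ) :
    (Real.sqrt (∑ i ∈ s, u i ^ 2) - Real.sqrt (∑ i ∈ s, w i ^ 2)) ^ 2
      ≤ ∑ i ∈ s, (u i - w i) ^ 2 := by
  set A := ∑ i ∈ s, u i ^ 2 with hA
  set Bq := ∑ i ∈ s, w i ^ 2 with hB
  have hA0 : 0 ≤ A := Finset.sum_nonneg fun i _ => sq_nonneg _
  have hB0 : 0 ≤ Bq := Finset.sum_nonneg fun i _ => sq_nonneg _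
  have hCS : (∑ i ∈ s, u i * w i) ≤ Real.sqrt A * Real.sqrt Bq := by
    have h1 : (∑ i ∈ s, u i * w i) ^ 2 ≤ A * Bq := Finset.sum_mul_sq_le_sq_mul_sq s u w
    have h2 : (∑ i ∈ s, u i * w i) ≤ |∑ i ∈ s, u i * w i| := le_abs_self _
    calc (∑ i ∈ s, u i * w i) ≤ |∑ i ∈ s, u i * w i| := h2
      _ = Real.sqrt ((∑ i ∈ s, u i * w i) ^ 2) := (Real.sqrt_sq_eq_abs _).symm
      _ ≤ Real.sqrt (A * Bq) := Real.sqrt_le_sqrt h1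
      _ = Real.sqrt A * Real.sqrt Bq := Real.sqrt_mul hA0 _
  have hexp : ∑ i ∈ s, (u i - w i) ^ 2 = A + Bq - 2 * ∑ i ∈ s, u i * w i := by
    rw [hA, hB, ← Finset.sum_add_distrib, Finset.mul_sum, ← Finset.sum_sub_distrib]
    exact Finset.sum_congr rfl fun i _ => by ring
  have h1 : Real.sqrt A ^ 2 = A := Real.sq_sqrt hA0
  have h2 : Real.sqrt Bq ^ 2 = Bq := Real.sq_sqrt hB0
  nlinarith [hCS]

/-- `2 log s ≤ s - 1/s` for `s ≥ 1`. -/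
lemma two_log_le {s : ℝ} (hs : 1 ≤ s) : 2 * Real.log s ≤ s - 1/s := by
  set h : ℝ → ℝ := fun t => t - t⁻¹ - 2 * Real.log t with hh
  have key : ∀ t ∈ Set.Ici (1:ℝ), HasDerivAt h (1 + t⁻¹^2 - 2 * t⁻¹) t := by
    intro t ht
    have ht0 : t ≠ 0 := by simp only [Set.mem_Ici] at ht; positivity
    have h1 : HasDerivAt (fun t : ℝ => t) 1 t := hasDerivAt_id t
    have h2 : HasDerivAt (fun t : ℝ => t⁻¹) (-(t^2)⁻¹) t := hasDerivAt_inv ht0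
    have h3 : HasDerivAt Real.log t⁻¹ t := Real.hasDerivAt_log ht0
    have := (h1.sub h2).sub ((h3.const_mul 2))
    refine this.congr_deriv ?_
    have ht2 : (t^2)⁻¹ = t⁻¹^2 := by rw [sq, sq, mul_inv]
    rw [ht2]
    ring
  have hmono : MonotoneOn h (Set.Ici 1) := by
    apply monotoneOn_of_deriv_nonneg (convex_Ici 1)
    · intro t ht
      exact (key t ht).continuousAt.continuousWithinAt
    · intro t ht
      rw [interior_Ici] at ht
      exact (key t (Set.mem_Ici.mpr (le_of_lt ht))).differentiableAt.differentiableWithinAt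
    · intro t ht
      rw [interior_Ici] at ht
      rw [(key t (Set.mem_Ici.mpr (le_of_lt ht))).deriv]
      have ht1 : (1:ℝ) < t := ht
      nlinarith [sq_nonneg (1 - t⁻¹)]
  have h1 : h 1 ≤ h s := hmono (by norm_num) hs hs
  simp only [hh, Real.log_one] at h1
  norm_num at h1
  rw [one_div]
  linarith

/-- `s - 1/s ≤ 2 log s` fails direction; for `0 < s ≤ 1` we get `s - 1/s - 2 log s ≤ 0`. -/
lemma two_log_ge {s : ℝ} (hs0 : 0 < s) (hs : s ≤ 1) : s - 1/s ≤ 2 * Real.log s := by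
  have hinv : 0 < s⁻¹ := by positivity
  have hss : s * s⁻¹ = 1 := mul_inv_cancel₀ (ne_of_gt hs0)
  have h1s : (1:ℝ) ≤ s⁻¹ := by nlinarith
  have h := two_log_le (s := s⁻¹) h1s
  rw [Real.log_inv] at h
  have h' : 2 * (-Real.log s) ≤ s⁻¹ - s := by
    have : (1:ℝ)/s⁻¹ = s := by rw [one_div, inv_inv]
    rw [this] at h; linarith
  rw [one_div]
  linarith

end StmtAux

namespace StmtAux

noncomputable def Ffun (x : ℝ) : ℝ :=
  x * Real.log x + (2 - x) * Real.log (2 - x) + 2 * Real.sqrt (x * (2 - x))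

lemma hasDerivAt_F {x : ℝ} (hx : 0 < x) (hx2 : x < 2) :
    HasDerivAt Ffun (Real.log x - Real.log (2 - x) + (2 - 2*x) / Real.sqrt (x * (2 - x))) x := by
  have hx0 : x ≠ 0 := ne_of_gt hx
  have h2x : (0:ℝ) < 2 - x := by linarith
  have h2x0 : 2 - x ≠ 0 := ne_of_gt h2x
  have hu : (0:ℝ) < x * (2 - x) := by positivity
  have hu0 : x * (2 - x) ≠ 0 := ne_of_gt hu
  have hsq : (0:ℝ) < Real.sqrt (x * (2 - x)) := Real.sqrt_pos.2 hu
  -- first term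
  have h1 : HasDerivAt (fun y : ℝ => y * Real.log y) (Real.log x + 1) x := by
    have := (hasDerivAt_id x).mul (Real.hasDerivAt_log hx0)
    refine this.congr_deriv ?_
    field_simp
    simp only [id]
    ring
  -- second term
  have h2 : HasDerivAt (fun y : ℝ => (2 - y) * Real.log (2 - y)) (-(Real.log (2 - x) + 1)) x := by
    have houter : HasDerivAt (fun t : ℝ => t * Real.log t) (Real.log (2 - x) + 1) (2 - x) := by
      have := (hasDerivAt_id (2 - x)).mul (Real.hasDerivAt_log h2x0)
      refine this.congr_deriv ?_
      field_simp
      simp only [id]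
      ring
    have hinner : HasDerivAt (fun y : ℝ => 2 - y) (-1) x := by
      exact ((hasDerivAt_const x (2:ℝ)).sub (hasDerivAt_id x)).congr_deriv (by ring)
    have := houter.comp x hinner
    refine this.congr_deriv ?_
    ring
  -- third term
  have h3 : HasDerivAt (fun y : ℝ => 2 * Real.sqrt (y * (2 - y)))
      ((2 - 2*x) / Real.sqrt (x * (2 - x))) x := by
    have hinner : HasDerivAt (fun y : ℝ => y * (2 - y)) (2 - 2*x) x := by
      have := (hasDerivAt_id x).mul ((hasDerivAt_const x (2:ℝ)).sub (hasDerivAt_id x))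
      refine this.congr_deriv ?_
      simp only [id, Pi.sub_apply]
      ring
    have houter : HasDerivAt Real.sqrt (1 / (2 * Real.sqrt (x * (2 - x)))) (x * (2 - x)) :=
      Real.hasDerivAt_sqrt hu0
    have hcomp := houter.comp x hinner
    have := hcomp.const_mul (2:ℝ)
    refine this.congr_deriv ?_
    field_simp
  have := (h1.add h2).add h3
  refine this.congr_deriv ?_
  ring

lemma F_one : Ffun 1 = 2 := by
  norm_num [Ffun, Real.log_one, Real.sqrt_one]

lemma Fderiv_nonneg {x : ℝ} (hx : 0 < x) (hx1 : x < 1) :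
    0 ≤ Real.log x - Real.log (2 - x) + (2 - 2*x) / Real.sqrt (x * (2 - x)) := by
  have h2x : (0:ℝ) < 2 - x := by linarith
  have hu : (0:ℝ) < x * (2 - x) := by positivity
  have hsq : (0:ℝ) < Real.sqrt (x * (2 - x)) := Real.sqrt_pos.2 hu
  set s := Real.sqrt ((2 - x) / x) with hs
  have hsrat : (1:ℝ) ≤ (2 - x) / x := by
    rw [le_div_iff₀ hx]; linarith
  have hs1 : (1:ℝ) ≤ s := by
    rw [hs]; exact Real.one_le_sqrt.2 hsrat
  have hs0 : (0:ℝ) < s := lt_of_lt_of_le one_pos hs1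
  -- s * √(x(2-x)) = 2 - x  and  (1/s) * √(x(2-x)) = x
  have hmul : s * Real.sqrt (x * (2 - x)) = 2 - x := by
    rw [hs, ← Real.sqrt_mul (by positivity)]
    have : (2 - x) / x * (x * (2 - x)) = (2 - x)^2 := by field_simp
    rw [this, Real.sqrt_sq (le_of_lt h2x)]
  have hmul2 : s⁻¹ * Real.sqrt (x * (2 - x)) = x := by
    rw [hs, ← Real.sqrt_inv]
    have hinv : ((2 - x) / x)⁻¹ = x / (2 - x) := by
      rw [inv_div]
    rw [hinv, ← Real.sqrt_mul (by positivity)]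
    have hxx : x / (2 - x) * (x * (2 - x)) = x^2 := by field_simp
    rw [hxx, Real.sqrt_sq (le_of_lt hx)]
  have hlog : Real.log x - Real.log (2 - x) = -(2 * Real.log s) := by
    rw [hs, Real.log_sqrt (by positivity), Real.log_div (ne_of_gt h2x) (ne_of_gt hx)]
    ring
  have hfrac : (2 - 2*x) / Real.sqrt (x * (2 - x)) = s - 1/s := by
    rw [eq_comm, eq_div_iff (ne_of_gt hsq), sub_mul, one_div, hmul, hmul2]
    ring
  rw [hlog, hfrac]
  have := two_log_le hs1
  linarith

lemma Fderiv_nonpos {x : ℝ} (hx1 : 1 < x) (hx2 : x < 2) :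
    Real.log x - Real.log (2 - x) + (2 - 2*x) / Real.sqrt (x * (2 - x)) ≤ 0 := by
  have hx : (0:ℝ) < x := by linarith
  have h2x : (0:ℝ) < 2 - x := by linarith
  have hu : (0:ℝ) < x * (2 - x) := by positivity
  have hsq : (0:ℝ) < Real.sqrt (x * (2 - x)) := Real.sqrt_pos.2 hu
  set s := Real.sqrt ((2 - x) / x) with hs
  have hsrat : (2 - x) / x ≤ 1 := by
    rw [div_le_one hx]; linarith
  have hs0 : (0:ℝ) < s := Real.sqrt_pos.2 (by positivity)
  have hs1 : s ≤ 1 := by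
    rw [hs, show (1:ℝ) = Real.sqrt 1 by simp]
    exact Real.sqrt_le_sqrt hsrat
  have hmul : s * Real.sqrt (x * (2 - x)) = 2 - x := by
    rw [hs, ← Real.sqrt_mul (by positivity)]
    have : (2 - x) / x * (x * (2 - x)) = (2 - x)^2 := by field_simp
    rw [this, Real.sqrt_sq (le_of_lt h2x)]
  have hmul2 : s⁻¹ * Real.sqrt (x * (2 - x)) = x := by
    rw [hs, ← Real.sqrt_inv]
    have hinv : ((2 - x) / x)⁻¹ = x / (2 - x) := by
      rw [inv_div]
    rw [hinv, ← Real.sqrt_mul (by positivity)]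
    have hxx : x / (2 - x) * (x * (2 - x)) = x^2 := by field_simp
    rw [hxx, Real.sqrt_sq (le_of_lt hx)]
  have hlog : Real.log x - Real.log (2 - x) = -(2 * Real.log s) := by
    rw [hs, Real.log_sqrt (by positivity), Real.log_div (ne_of_gt h2x) (ne_of_gt hx)]
    ring
  have hfrac : (2 - 2*x) / Real.sqrt (x * (2 - x)) = s - 1/s := by
    rw [eq_comm, eq_div_iff (ne_of_gt hsq), sub_mul, one_div, hmul, hmul2]
    ring
  rw [hlog, hfrac]
  have := two_log_ge hs0 hs1
  linarith

lemma F_le_two {x : ℝ} (hx : x ∈ Set.Icc (0:ℝ) 2) : Ffun x ≤ 2 := by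
  have hlog2 : Real.log 2 < 1 := by
    have := Real.log_two_lt_d9
    linarith
  rcases eq_or_lt_of_le hx.1 with h0 | h0
  · rw [← h0]; simp [Ffun]; nlinarith
  rcases eq_or_lt_of_le hx.2 with h2 | h2
  · rw [h2]; simp [Ffun]; nlinarith
  -- interior
  have hcont1 : ContinuousOn Ffun (Set.Ioc 0 1) := by
    intro y hy
    exact (hasDerivAt_F hy.1 (by linarith [hy.2])).continuousAt.continuousWithinAt
  have hcont2 : ContinuousOn Ffun (Set.Ico 1 2) := by
    intro y hy
    exact (hasDerivAt_F (by linarith [hy.1]) hy.2).continuousAt.continuousWithinAt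
  rcases le_total x 1 with hx1 | hx1
  · have hmono : MonotoneOn Ffun (Set.Ioc 0 1) := by
      apply monotoneOn_of_deriv_nonneg (convex_Ioc 0 1) hcont1
      · intro y hy
        rw [interior_Ioc] at hy
        exact (hasDerivAt_F hy.1 (by linarith [hy.2])).differentiableAt.differentiableWithinAt
      · intro y hy
        rw [interior_Ioc] at hy
        rw [(hasDerivAt_F hy.1 (by linarith [hy.2])).deriv]
        exact Fderiv_nonneg hy.1 hy.2
    have := hmono (Set.mem_Ioc.2 ⟨h0, hx1⟩) (Set.mem_Ioc.2 ⟨one_pos, le_refl 1⟩) hx1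
    rw [F_one] at this
    exact this
  · have hanti : AntitoneOn Ffun (Set.Ico 1 2) := by
      apply antitoneOn_of_deriv_nonpos (convex_Ico 1 2) hcont2
      · intro y hy
        rw [interior_Ico] at hy
        exact (hasDerivAt_F (by linarith [hy.1]) hy.2).differentiableAt.differentiableWithinAt
      · intro y hy
        rw [interior_Ico] at hy
        rw [(hasDerivAt_F (by linarith [hy.1]) hy.2).deriv]
        exact Fderiv_nonpos hy.1 hy.2
    have := hanti (Set.mem_Ico.2 ⟨le_refl 1, one_lt_two⟩) (Set.mem_Ico.2 ⟨hx1, h2⟩) hx1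
    rw [F_one] at this
    exact this

end StmtAux

namespace StmtAux

/-- Two-point log-Sobolev inequality. -/
lemma two_point {α β : ℝ} (hα : 0 ≤ α) (hβ : 0 ≤ β) :
    (α * Real.log α + β * Real.log β) / 2 - ((α + β)/2) * Real.log ((α + β)/2)
      ≤ (Real.sqrt α - Real.sqrt β)^2 / 2 := by
  rcases eq_or_lt_of_le (by positivity : (0:ℝ) ≤ (α + β)/2) with h0 | hmpos
  · have hα0 : α = 0 := by linarith
    have hβ0 : β = 0 := by linarith
    simp [hα0, hβ0]
  set m := (α + β)/2 with hm
  have hm0 : m ≠ 0 := ne_of_gt hmpos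
  have hab : α + β = 2 * m := by rw [hm]; ring
  have hx0 : (0:ℝ) ≤ α / m := by positivity
  have hx2 : α / m ≤ 2 := by rw [div_le_iff₀ hmpos]; linarith
  have h2x : 2 - α / m = β / m := by
    rw [eq_div_iff hm0, sub_mul, div_mul_cancel₀ _ hm0]
    linarith
  have hF := F_le_two (x := α/m) ⟨hx0, hx2⟩
  rw [Ffun, h2x] at hF
  have hkey : ∀ t : ℝ, 0 ≤ t →
      t * Real.log t = m * ((t/m) * Real.log (t/m)) + t * Real.log m := by
    intro t ht
    rcases eq_or_lt_of_le ht with h | h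
    · simp [← h]
    · rw [Real.log_div (ne_of_gt h) hm0]
      field_simp
      ring
  have hlhs : (α * Real.log α + β * Real.log β) / 2 - m * Real.log m
      = (m/2) * ((α/m) * Real.log (α/m) + (β/m) * Real.log (β/m)) := by
    rw [hkey α hα, hkey β hβ]
    have h2 : α * Real.log m + β * Real.log m = 2 * m * Real.log m := by
      rw [← add_mul, hab]
    linear_combination h2 / 2
  have hsqrt : Real.sqrt (α/m * (β/m)) = Real.sqrt α * Real.sqrt β / m := by
    rw [div_mul_div_comm, Real.sqrt_div (by positivity) _, Real.sqrt_mul_self (le_of_lt hmpos),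
      Real.sqrt_mul hα]
  rw [hlhs]
  have hle : (α/m) * Real.log (α/m) + (β/m) * Real.log (β/m)
      ≤ 2 - 2 * (Real.sqrt α * Real.sqrt β / m) := by
    rw [← hsqrt]; linarith
  have hmul := mul_le_mul_of_nonneg_left hle (by positivity : (0:ℝ) ≤ m/2)
  have hright : (m/2) * (2 - 2 * (Real.sqrt α * Real.sqrt β / m))
      = m - Real.sqrt α * Real.sqrt β := by
    field_simp
  rw [hright] at hmul
  have hsq : Real.sqrt α ^ 2 = α := Real.sq_sqrt hα
  have hsq2 : Real.sqrt β ^ 2 = β := Real.sq_sqrt hβ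
  refine le_trans hmul ?_
  rw [hm]
  nlinarith [hsq, hsq2]

/-- Log-sum inequality. -/
lemma log_sum_ineq {ι : Type*} (s : Finset ι) (w z : ι → ℝ)
    (hw : ∀ i ∈ s, 0 < w i) (hz : ∀ i ∈ s, 0 < z i) (hne : s.Nonempty) :
    (∑ i ∈ s, w i) * Real.log ((∑ i ∈ s, w i) / (∑ i ∈ s, z i))
      ≤ ∑ i ∈ s, w i * Real.log (w i / z i) := by
  set A := ∑ i ∈ s, w i with hA
  set Bz := ∑ i ∈ s, z i with hB
  obtain ⟨i₀, hi₀⟩ := hne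
  have hApos : 0 < A := Finset.sum_pos hw ⟨i₀, hi₀⟩
  have hBpos : 0 < Bz := Finset.sum_pos hz ⟨i₀, hi₀⟩
  have key : ∀ i ∈ s, w i * Real.log (A / Bz) + (w i - z i * A / Bz)
      ≤ w i * Real.log (w i / z i) := by
    intro i hi
    have hwi := hw i hi
    have hzi := hz i hi
    have ht : (0:ℝ) < (w i * Bz) / (z i * A) := by positivity
    have hlog := one_sub_inv_le_log ht
    have hinv : 1 / ((w i * Bz) / (z i * A)) = (z i * A)/(w i * Bz) := by
      field_simp
    rw [hinv] at hlog
    have hlogeq : Real.log ((w i * Bz) / (z i * A))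
        = Real.log (w i / z i) - Real.log (A / Bz) := by
      rw [Real.log_div (by positivity) (by positivity),
        Real.log_div (ne_of_gt hwi) (ne_of_gt hzi),
        Real.log_div (ne_of_gt hApos) (ne_of_gt hBpos),
        Real.log_mul (ne_of_gt hwi) (ne_of_gt hBpos),
        Real.log_mul (ne_of_gt hzi) (ne_of_gt hApos)]
      ring
    rw [hlogeq] at hlog
    have hml := mul_le_mul_of_nonneg_left hlog (le_of_lt hwi)
    have hfrac : w i * (1 - z i * A / (w i * Bz)) = w i - z i * A / Bz := by
      field_simp
    rw [hfrac] at hml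
    linarith
  have hsum := Finset.sum_le_sum key
  rw [Finset.sum_add_distrib] at hsum
  have h1 : ∑ i ∈ s, w i * Real.log (A / Bz) = A * Real.log (A / Bz) := by
    rw [← Finset.sum_mul]
  have h2 : ∑ i ∈ s, (w i - z i * A / Bz) = 0 := by
    rw [Finset.sum_sub_distrib]
    have h3 : ∑ i ∈ s, z i * A / Bz = A := by
      rw [← Finset.sum_div, ← Finset.sum_mul, ← hB, mul_comm, mul_div_assoc,
        div_self (ne_of_gt hBpos), mul_one]
    rw [h3, ← hA, sub_self]
  rw [h1, h2] at hsum
  linarith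

/-- Monotonicity of `x ↦ x log(x/c)` above `c/e`. -/
lemma xlogx_mono {c x y : ℝ} (hc : 0 < c) (hx : 0 < x) (hlx : -1 ≤ Real.log (x/c))
    (hxy : x ≤ y) : x * Real.log (x/c) ≤ y * Real.log (y/c) := by
  have hy : 0 < y := lt_of_lt_of_le hx hxy
  have hlogdiff : Real.log (y/c) - Real.log (x/c) = Real.log (y/x) := by
    rw [Real.log_div (ne_of_gt hy) (ne_of_gt hc), Real.log_div (ne_of_gt hx) (ne_of_gt hc),
      Real.log_div (ne_of_gt hy) (ne_of_gt hx)]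
    ring
  have hyx := one_sub_inv_le_log (t := y/x) (by positivity)
  have hinv : 1/(y/x) = x/y := by field_simp
  rw [hinv] at hyx
  have expand : y * Real.log (y/c) - x * Real.log (x/c)
      = y * (Real.log (y/c) - Real.log (x/c)) + (y - x) * Real.log (x/c) := by ring
  have t1 : y * (Real.log (y/c) - Real.log (x/c)) ≥ y - x := by
    rw [hlogdiff]
    have := mul_le_mul_of_nonneg_left hyx (le_of_lt hy)
    have hxy' : y * (1 - x/y) = y - x := by field_simp
    linarith [hxy' ▸ this]
  have t2 : (y - x) * Real.log (x/c) ≥ -(y - x) := by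
    nlinarith [hlx, sub_nonneg.2 hxy]
  linarith

/-- The final numeric inequality. -/
lemma final_numeric {L : ℝ} (hL : 0 < L) :
    L < 7.2 * (L - Real.log L + (Real.log 14.4 - 2)) := by
  have hr : Real.sqrt L > 0 := Real.sqrt_pos.2 hL
  have hrsq : Real.sqrt L ^ 2 = L := Real.sq_sqrt (le_of_lt hL)
  have hlog : Real.log L ≤ 2 * (Real.sqrt L - 1) := by
    have h1 : Real.log (Real.sqrt L) ≤ Real.sqrt L - 1 := Real.log_le_sub_one_of_pos hr
    have h2 : Real.log (Real.sqrt L) = Real.log L / 2 := Real.log_sqrt (le_of_lt hL)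
    linarith
  have hlog14 : 2 < Real.log 14.4 := by
    rw [show (2:ℝ) = Real.log (Real.exp 2) by rw [Real.log_exp]]
    apply Real.log_lt_log (Real.exp_pos 2)
    rw [show (2:ℝ) = 1 + 1 by norm_num, Real.exp_add]
    nlinarith [Real.exp_one_lt_d9, Real.exp_pos 1]
  nlinarith [sq_nonneg (31 * Real.sqrt L - 36), hr, hrsq, hlog, hlog14]

end StmtAux


namespace StmtAux

lemma fin2_self_ne_add_one (a : Fin 2) : a ≠ a + 1 := by revert a; decide

lemma fin2_eq_add_one_of_ne {a b : Fin 2} (h : a ≠ b) : a = b + 1 := by revert a b; decide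

lemma fin2_add_one_inj {a b : Fin 2} (h : a + 1 = b + 1) : a = b := by revert a b; decide

variable {n : ℕ}

lemma flip_apply (x : Fin n → Fin 2) (k j : Fin n) :
    flipBit x k j = if j = k then x k + 1 else x j := by
  simp [flipBit, Function.update_apply]

lemma flip_apply_self (x : Fin n → Fin 2) (k : Fin n) : flipBit x k k = x k + 1 := by
  simp [flip_apply]

lemma flip_apply_ne (x : Fin n → Fin 2) {k j : Fin n} (h : j ≠ k) : flipBit x k j = x j := by
  simp [flip_apply, h]

lemma flip_involutive (k : Fin n) : Function.Involutive (fun x => flipBit x k) := by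
  intro x
  funext j
  show flipBit (flipBit x k) k j = x j
  by_cases h : j = k
  · subst h
    rw [flip_apply_self, flip_apply_self]
    have : ∀ a : Fin 2, a + 1 + 1 = a := by decide
    exact this (x j)
  · rw [flip_apply_ne _ h, flip_apply_ne _ h]

/-- Summing a function composed with a bit flip. -/
lemma sum_flip (k : Fin n) (h : (Fin n → Fin 2) → ℝ) :
    ∑ x, h (flipBit x k) = ∑ x, h x := by
  exact Fintype.sum_bijective _ (flip_involutive k).bijective _ _ (fun x => rfl)

lemma expecb_flip (k : Fin n) (h : (Fin n → Fin 2) → ℝ) :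
    expecb (fun x => h (flipBit x k)) = expecb h := by
  unfold expecb
  rw [sum_flip]

lemma expecb_add (u w : (Fin n → Fin 2) → ℝ) :
    expecb (fun x => u x + w x) = expecb u + expecb w := by
  unfold expecb
  rw [Finset.sum_add_distrib, add_div]

lemma expecb_sub (u w : (Fin n → Fin 2) → ℝ) :
    expecb (fun x => u x - w x) = expecb u - expecb w := by
  unfold expecb
  rw [Finset.sum_sub_distrib, sub_div]

lemma expecb_div2 (u : (Fin n → Fin 2) → ℝ) :
    expecb (fun x => u x / 2) = expecb u / 2 := by
  unfold expecb
  rw [← Finset.sum_div]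
  ring

lemma expecb_const (c : ℝ) : expecb (fun _ : Fin n → Fin 2 => c) = c := by
  unfold expecb
  rw [Finset.sum_const]
  have : (Finset.univ : Finset (Fin n → Fin 2)).card = 2 ^ n := by
    simp [Finset.card_univ]
  rw [this]
  have h2 : (0:ℝ) < 2 ^ n := by positivity
  field_simp
  simp [nsmul_eq_mul]

lemma expecb_mono {u w : (Fin n → Fin 2) → ℝ} (h : ∀ x, u x ≤ w x) : expecb u ≤ expecb w := by
  unfold expecb
  have h2 : (0:ℝ) < 2 ^ n := by positivity
  have hs : (∑ x, u x) ≤ ∑ x, w x := Finset.sum_le_sum fun x _ => h x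
  gcongr

lemma expecb_nonneg {u : (Fin n → Fin 2) → ℝ} (h : ∀ x, 0 ≤ u x) : 0 ≤ expecb u := by
  unfold expecb
  have : (0:ℝ) ≤ ∑ x, u x := Finset.sum_nonneg fun x _ => h x
  positivity

end StmtAux

namespace StmtAux

variable {n : ℕ}

/-- Conditional average given the first `i` coordinates. -/
noncomputable def cavg (i : ℕ) (g : (Fin n → Fin 2) → ℝ) (x : Fin n → Fin 2) : ℝ :=
  (∑ y, if (∀ j : Fin n, (j : ℕ) < i → y j = x j) then g y else 0) / 2 ^ (n - i)

lemma cavg_ge {i : ℕ} (hi : n ≤ i) (g : (Fin n → Fin 2) → ℝ) (x : Fin n → Fin 2) :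
    cavg i g x = g x := by
  unfold cavg
  have hcond : ∀ y : Fin n → Fin 2,
      (∀ j : Fin n, (j : ℕ) < i → y j = x j) ↔ y = x := by
    intro y
    constructor
    · intro h
      funext j
      exact h j (lt_of_lt_of_le j.isLt hi)
    · intro h j _
      rw [h]
  have : (∑ y, if (∀ j : Fin n, (j : ℕ) < i → y j = x j) then g y else 0)
      = ∑ y, if y = x then g y else 0 := by
    apply Finset.sum_congr rfl
    intro y _
    simp only [hcond y]
  rw [this, Finset.sum_ite_eq' Finset.univ x g]
  simp [Nat.sub_eq_zero_of_le hi]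

lemma cavg_zero (g : (Fin n → Fin 2) → ℝ) (x : Fin n → Fin 2) :
    cavg 0 g x = expecb g := by
  unfold cavg expecb
  simp

lemma cavg_nonneg {g : (Fin n → Fin 2) → ℝ} (hg : ∀ y, 0 ≤ g y) (i : ℕ) (x : Fin n → Fin 2) :
    0 ≤ cavg i g x := by
  unfold cavg
  have : (0:ℝ) ≤ ∑ y, if (∀ j : Fin n, (j : ℕ) < i → y j = x j) then g y else 0 := by
    apply Finset.sum_nonneg
    intro y _
    split
    · exact hg y
    · exact le_rfl
  exact div_nonneg this (by positivity)

lemma cavg_sub (i : ℕ) (u w : (Fin n → Fin 2) → ℝ) (x : Fin n → Fin 2) :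
    cavg i (fun y => u y - w y) x = cavg i u x - cavg i w x := by
  unfold cavg
  rw [div_sub_div_same, ← Finset.sum_sub_distrib]
  congr 1
  apply Finset.sum_congr rfl
  intro y _
  split
  · rfl
  · ring

lemma abs_cavg_le (i : ℕ) (g : (Fin n → Fin 2) → ℝ) (x : Fin n → Fin 2) :
    |cavg i g x| ≤ cavg i (fun y => |g y|) x := by
  unfold cavg
  rw [abs_div, abs_of_pos (by positivity : (0:ℝ) < (2:ℝ) ^ (n - i))]
  have hnum : |∑ y, if (∀ j : Fin n, (j : ℕ) < i → y j = x j) then g y else 0|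
      ≤ ∑ y, if (∀ j : Fin n, (j : ℕ) < i → y j = x j) then |g y| else 0 := by
    refine le_trans (Finset.abs_sum_le_sum_abs _ _) ?_
    apply Finset.sum_le_sum
    intro y _
    split
    · exact le_refl _
    · simp
  gcongr

/-- Flipping commutes with conditional averaging (as a change of variables). -/
lemma cavg_flip (i : ℕ) (k : Fin n) (g : (Fin n → Fin 2) → ℝ) (x : Fin n → Fin 2) :
    cavg i g (flipBit x k) = cavg i (fun y => g (flipBit y k)) x := by
  unfold cavg
  congr 1
  rw [← sum_flip k (fun y => if (∀ j : Fin n, (j : ℕ) < i → y j = flipBit x k j) then g y else 0)]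
  apply Finset.sum_congr rfl
  intro y _
  have hcond : (∀ j : Fin n, (j : ℕ) < i → flipBit y k j = flipBit x k j)
      ↔ (∀ j : Fin n, (j : ℕ) < i → y j = x j) := by
    constructor
    · intro h j hj
      have := h j hj
      by_cases hjk : j = k
      · subst hjk
        rw [flip_apply_self, flip_apply_self] at this
        exact fin2_add_one_inj this
      · rwa [flip_apply_ne _ hjk, flip_apply_ne _ hjk] at this
    · intro h j hj
      by_cases hjk : j = k
      · subst hjk
        rw [flip_apply_self, flip_apply_self, h j hj]
      · rw [flip_apply_ne _ hjk, flip_apply_ne _ hjk]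
        exact h j hj
  by_cases h : ∀ j : Fin n, (j : ℕ) < i → y j = x j
  · rw [if_pos (hcond.2 h), if_pos h]
  · rw [if_neg (fun hc => h (hcond.1 hc)), if_neg h]

/-- `cavg i g` does not depend on coordinates `≥ i`. -/
lemma cavg_flip_invariant {i : ℕ} {k : Fin n} (hk : i ≤ (k : ℕ)) (g : (Fin n → Fin 2) → ℝ)
    (x : Fin n → Fin 2) : cavg i g (flipBit x k) = cavg i g x := by
  unfold cavg
  congr 1
  apply Finset.sum_congr rfl
  intro y _
  have hcond : (∀ j : Fin n, (j : ℕ) < i → y j = flipBit x k j)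
      ↔ (∀ j : Fin n, (j : ℕ) < i → y j = x j) := by
    have hflip : ∀ j : Fin n, (j : ℕ) < i → flipBit x k j = x j := by
      intro j hj
      apply flip_apply_ne
      intro hjk
      rw [hjk] at hj
      omega
    constructor
    · intro h j hj
      rw [← hflip j hj]
      exact h j hj
    · intro h j hj
      rw [hflip j hj]
      exact h j hj
  by_cases h : ∀ j : Fin n, (j : ℕ) < i → y j = x j
  · rw [if_pos (hcond.2 h), if_pos h]
  · rw [if_neg (fun hc => h (hcond.1 hc)), if_neg h]

/-- The one-step splitting of the conditional average. -/
lemma cavg_succ {i : ℕ} (hi : i < n) (g : (Fin n → Fin 2) → ℝ) (x : Fin n → Fin 2) :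
    cavg i g x = (cavg (i+1) g x + cavg (i+1) g (flipBit x ⟨i, hi⟩)) / 2 := by
  set k : Fin n := ⟨i, hi⟩ with hk
  have hsplit : ∀ y : Fin n → Fin 2,
      (if (∀ j : Fin n, (j : ℕ) < i → y j = x j) then g y else 0)
      = (if (∀ j : Fin n, (j : ℕ) < i + 1 → y j = x j) then g y else 0)
        + (if (∀ j : Fin n, (j : ℕ) < i + 1 → y j = flipBit x k j) then g y else 0) := by
    intro y
    by_cases h1 : ∀ j : Fin n, (j : ℕ) < i + 1 → y j = x j
    · have hP : ∀ j : Fin n, (j : ℕ) < i → y j = x j := fun j hj => h1 j (by omega)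
      have hnot : ¬(∀ j : Fin n, (j : ℕ) < i + 1 → y j = flipBit x k j) := by
        intro h2
        have e1 := h1 k (by rw [hk]; exact Nat.lt_succ_self i)
        have e2 := h2 k (by rw [hk]; exact Nat.lt_succ_self i)
        rw [flip_apply_self] at e2
        exact fin2_self_ne_add_one (x k) (e1 ▸ e2)
      rw [if_pos hP, if_pos h1, if_neg hnot]
      ring
    · by_cases hP : ∀ j : Fin n, (j : ℕ) < i → y j = x j
      · have h2 : ∀ j : Fin n, (j : ℕ) < i + 1 → y j = flipBit x k j := by
          intro j hj
          by_cases hjk : j = k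
          · rw [hjk, flip_apply_self]
            have hyk : y k ≠ x k := by
              intro he
              apply h1
              intro j' hj'
              rcases Nat.lt_succ_iff_lt_or_eq.1 hj' with h' | h'
              · exact hP j' h'
              · have hj'k : j' = k := by
                  apply Fin.ext
                  rw [hk]
                  exact h'
                rw [hj'k]
                exact he
            exact fin2_eq_add_one_of_ne hyk
          · rw [flip_apply_ne _ hjk]
            apply hP
            have hne : (j : ℕ) ≠ i := by
              intro hc
              apply hjk
              apply Fin.ext
              rw [hk]
              exact hc
            omega
        rw [if_pos hP, if_neg h1, if_pos h2]
        ring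
      · have hnot : ¬(∀ j : Fin n, (j : ℕ) < i + 1 → y j = flipBit x k j) := by
          intro h2
          apply hP
          intro j hj
          have hjk : j ≠ k := by
            intro hc
            have hji : (j : ℕ) = i := by rw [hc, hk]
            omega
          have := h2 j (by omega)
          rwa [flip_apply_ne _ hjk] at this
        rw [if_neg hP, if_neg h1, if_neg hnot]
        ring
  unfold cavg
  rw [Finset.sum_congr rfl (fun y _ => hsplit y), Finset.sum_add_distrib]
  have hpow : (2:ℝ) ^ (n - i) = 2 ^ (n - (i+1)) * 2 := by
    rw [← pow_succ]
    congr 1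
    omega
  rw [hpow]
  field_simp

end StmtAux

namespace StmtAux

variable {n : ℕ}

/-- Martingale difference. -/
noncomputable def Vd (k : Fin n) (g : (Fin n → Fin 2) → ℝ) (x : Fin n → Fin 2) : ℝ :=
  cavg ((k : ℕ) + 1) g x - cavg (k : ℕ) g x

lemma cavg_succ' (k : Fin n) (g : (Fin n → Fin 2) → ℝ) (x : Fin n → Fin 2) :
    cavg (k : ℕ) g x = (cavg ((k : ℕ)+1) g x + cavg ((k : ℕ)+1) g (flipBit x k)) / 2 := by
  have := cavg_succ (i := (k : ℕ)) k.isLt g x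
  simpa using this

lemma Vd_eq_half (k : Fin n) (g : (Fin n → Fin 2) → ℝ) (x : Fin n → Fin 2) :
    Vd k g x = (cavg ((k : ℕ)+1) g x - cavg ((k : ℕ)+1) g (flipBit x k)) / 2 := by
  rw [Vd, cavg_succ' k g x]
  ring

lemma expecb_cavg (i : ℕ) (g : (Fin n → Fin 2) → ℝ) :
    expecb (fun x => cavg i g x) = expecb g := by
  -- downward induction on `n - i`: we prove it for all `i` by strong recursion
  by_cases hi : n ≤ i
  · apply congrArg
    funext x
    exact cavg_ge hi g x
  · push_neg at hi
    -- relate to i+1 and recurse on n - i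
    have key : ∀ d : ℕ, ∀ i : ℕ, n - i ≤ d → expecb (fun x => cavg i g x) = expecb g := by
      intro d
      induction d with
      | zero =>
        intro i hd
        have : n ≤ i := by omega
        apply congrArg
        funext x
        exact cavg_ge this g x
      | succ d ih =>
        intro i hd
        by_cases hni : n ≤ i
        · apply congrArg; funext x; exact cavg_ge hni g x
        · push_neg at hni
          have step : expecb (fun x => cavg i g x) = expecb (fun x => cavg (i+1) g x) := by
            have : (fun x => cavg i g x)
                = fun x => ((cavg (i+1) g x) + (cavg (i+1) g (flipBit x ⟨i, hni⟩))) / 2 := by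
              funext x
              exact cavg_succ hni g x
            rw [this]
            have hadd : expecb (fun x => (cavg (i+1) g x + cavg (i+1) g (flipBit x ⟨i, hni⟩)) / 2)
                = (expecb (fun x => cavg (i+1) g x)
                  + expecb (fun x => cavg (i+1) g (flipBit x ⟨i, hni⟩))) / 2 := by
              rw [← expecb_add, ← expecb_div2]
            rw [hadd, expecb_flip ⟨i, hni⟩ (fun x => cavg (i+1) g x)]
            ring
          rw [step]
          exact ih (i+1) (by omega)
    exact key (n - i) i le_rfl

/-- Variance decomposition into martingale differences. -/
lemma var_decomp (g : (Fin n → Fin 2) → ℝ) :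
    expecb (fun x => (g x)^2) - (expecb g)^2
      = ∑ k : Fin n, expecb (fun x => (Vd k g x)^2) := by
  have step : ∀ k : Fin n,
      expecb (fun x => (cavg ((k:ℕ)+1) g x)^2) - expecb (fun x => (cavg (k:ℕ) g x)^2)
        = expecb (fun x => (Vd k g x)^2) := by
    intro k
    have hpt : ∀ x, (cavg ((k:ℕ)+1) g x)^2 - (cavg (k:ℕ) g x)^2 - (Vd k g x)^2
        = ((cavg ((k:ℕ)+1) g x)^2 - ((fun y => (cavg ((k:ℕ)+1) g y)^2) (flipBit x k))) / 2 := by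
      intro x
      rw [Vd_eq_half, cavg_succ' k g x]
      ring
    have hE : expecb (fun x => (cavg ((k:ℕ)+1) g x)^2 - (cavg (k:ℕ) g x)^2 - (Vd k g x)^2)
        = 0 := by
      rw [show (fun x => (cavg ((k:ℕ)+1) g x)^2 - (cavg (k:ℕ) g x)^2 - (Vd k g x)^2)
          = fun x => ((cavg ((k:ℕ)+1) g x)^2
            - ((fun y => (cavg ((k:ℕ)+1) g y)^2) (flipBit x k))) / 2 from funext hpt]
      rw [expecb_div2, expecb_sub, expecb_flip k (fun y => (cavg ((k:ℕ)+1) g y)^2)]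
      ring
    rw [expecb_sub, expecb_sub] at hE
    linarith
  -- telescoping
  have htel : ∑ k : Fin n, (expecb (fun x => (cavg ((k:ℕ)+1) g x)^2)
      - expecb (fun x => (cavg (k:ℕ) g x)^2))
      = expecb (fun x => (cavg n g x)^2) - expecb (fun x => (cavg 0 g x)^2) := by
    rw [Fin.sum_univ_eq_sum_range
      (fun i => expecb (fun x => (cavg (i+1) g x)^2) - expecb (fun x => (cavg i g x)^2)) n]
    exact Finset.sum_range_sub (fun i => expecb (fun x => (cavg i g x)^2)) n
  have h1 : expecb (fun x => (cavg n g x)^2) = expecb (fun x => (g x)^2) := by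
    apply congrArg; funext x; rw [cavg_ge le_rfl]
  have h2 : expecb (fun x => (cavg 0 g x)^2) = (expecb g)^2 := by
    have : (fun x : Fin n → Fin 2 => (cavg 0 g x)^2) = fun _ => (expecb g)^2 := by
      funext x; rw [cavg_zero]
    rw [this, expecb_const]
  rw [← Finset.sum_congr rfl (fun k _ => step k), htel, h1, h2]

end StmtAux

namespace StmtAux

variable {n : ℕ}

/-- Entropy functional. -/
noncomputable def ent (h : (Fin n → Fin 2) → ℝ) : ℝ :=
  expecb (fun x => h x * Real.log (h x)) - expecb h * Real.log (expecb h)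

lemma cavg_sqrt_sub (k : Fin n) (V : (Fin n → Fin 2) → ℝ) (x : Fin n → Fin 2) :
    (Real.sqrt (cavg ((k:ℕ)+1) (fun y => (V y)^2) x)
      - Real.sqrt (cavg ((k:ℕ)+1) (fun y => (V y)^2) (flipBit x k)))^2
      ≤ cavg ((k:ℕ)+1) (fun y => (V y - V (flipBit y k))^2) x := by
  rw [cavg_flip ((k:ℕ)+1) k (fun y => (V y)^2) x]
  unfold cavg
  set N := (2:ℝ) ^ (n - ((k:ℕ)+1)) with hN
  have hNpos : (0:ℝ) < N := by rw [hN]; positivity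
  set P := fun y : Fin n → Fin 2 => (∀ j : Fin n, (j : ℕ) < (k:ℕ)+1 → y j = x j) with hP
  set SA := ∑ y, if P y then (V y)^2 else 0 with hSA
  set SB := ∑ y, if P y then (V (flipBit y k))^2 else 0 with hSB
  set SC := ∑ y, if P y then (V y - V (flipBit y k))^2 else 0 with hSC
  have hSA0 : 0 ≤ SA := Finset.sum_nonneg fun y _ => by split <;> [exact sq_nonneg _; exact le_rfl]
  have hSB0 : 0 ≤ SB := Finset.sum_nonneg fun y _ => by split <;> [exact sq_nonneg _; exact le_rfl]
  have hcore : (Real.sqrt SA - Real.sqrt SB)^2 ≤ SC := by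
    have e1 : SA = ∑ y ∈ Finset.univ.filter P, (V y)^2 := by
      rw [hSA, Finset.sum_filter]
    have e2 : SB = ∑ y ∈ Finset.univ.filter P, (V (flipBit y k))^2 := by
      rw [hSB, Finset.sum_filter]
    have e3 : SC = ∑ y ∈ Finset.univ.filter P, (V y - V (flipBit y k))^2 := by
      rw [hSC, Finset.sum_filter]
    rw [e1, e2, e3]
    exact sqrt_sub_sqrt_sq_le _ _ _
  have h1 : Real.sqrt (SA / N) = Real.sqrt SA / Real.sqrt N := Real.sqrt_div hSA0 N
  have h2 : Real.sqrt (SB / N) = Real.sqrt SB / Real.sqrt N := Real.sqrt_div hSB0 N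
  rw [h1, h2, div_sub_div_same, div_pow, Real.sq_sqrt (le_of_lt hNpos)]
  gcongr

/-- Averaging lemma. -/
lemma expecb_avg (u w : (Fin n → Fin 2) → ℝ) :
    expecb (fun x => (u x + w x)/2) = (expecb u + expecb w)/2 := by
  rw [← expecb_add, ← expecb_div2]

/-- Log-Sobolev inequality on the cube. -/
lemma ent_sq_le (V : (Fin n → Fin 2) → ℝ) :
    ent (fun x => (V x)^2)
      ≤ (1/2) * ∑ k : Fin n, expecb (fun x => (V x - V (flipBit x k))^2) := by
  set W := fun y : Fin n → Fin 2 => (V y)^2 with hW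
  have hW0 : ∀ y, 0 ≤ W y := fun y => sq_nonneg _
  have step : ∀ k : Fin n,
      expecb (fun x => cavg ((k:ℕ)+1) W x * Real.log (cavg ((k:ℕ)+1) W x))
        - expecb (fun x => cavg (k:ℕ) W x * Real.log (cavg (k:ℕ) W x))
      ≤ (1/2) * expecb (fun x => (V x - V (flipBit x k))^2) := by
    intro k
    have hA0 : ∀ x, 0 ≤ cavg ((k:ℕ)+1) W x := fun x => cavg_nonneg hW0 _ x
    have hTk : expecb (fun x => cavg (k:ℕ) W x * Real.log (cavg (k:ℕ) W x))
        = expecb (fun x => ((cavg ((k:ℕ)+1) W x + cavg ((k:ℕ)+1) W (flipBit x k))/2)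
            * Real.log ((cavg ((k:ℕ)+1) W x + cavg ((k:ℕ)+1) W (flipBit x k))/2)) := by
      apply congrArg
      funext x
      rw [cavg_succ' k W x]
    have hflip : expecb (fun x => cavg ((k:ℕ)+1) W (flipBit x k)
          * Real.log (cavg ((k:ℕ)+1) W (flipBit x k)))
        = expecb (fun x => cavg ((k:ℕ)+1) W x * Real.log (cavg ((k:ℕ)+1) W x)) :=
      expecb_flip k (fun x => cavg ((k:ℕ)+1) W x * Real.log (cavg ((k:ℕ)+1) W x))
    have hTk1 : expecb (fun x => cavg ((k:ℕ)+1) W x * Real.log (cavg ((k:ℕ)+1) W x))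
        = expecb (fun x =>
            (cavg ((k:ℕ)+1) W x * Real.log (cavg ((k:ℕ)+1) W x)
              + cavg ((k:ℕ)+1) W (flipBit x k)
                * Real.log (cavg ((k:ℕ)+1) W (flipBit x k))) / 2) := by
      rw [expecb_avg, hflip]
      ring
    have hpt : ∀ x,
        (cavg ((k:ℕ)+1) W x * Real.log (cavg ((k:ℕ)+1) W x)
          + cavg ((k:ℕ)+1) W (flipBit x k) * Real.log (cavg ((k:ℕ)+1) W (flipBit x k))) / 2
        - ((cavg ((k:ℕ)+1) W x + cavg ((k:ℕ)+1) W (flipBit x k))/2)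
            * Real.log ((cavg ((k:ℕ)+1) W x + cavg ((k:ℕ)+1) W (flipBit x k))/2)
        ≤ cavg ((k:ℕ)+1) (fun y => (V y - V (flipBit y k))^2) x / 2 := by
      intro x
      have h2p := two_point (hA0 x) (hA0 (flipBit x k))
      refine le_trans h2p ?_
      have hmk := cavg_sqrt_sub k V x
      rw [hW]
      linarith
    have hEC : expecb (fun x => cavg ((k:ℕ)+1) (fun y => (V y - V (flipBit y k))^2) x / 2)
        = expecb (fun x => (V x - V (flipBit x k))^2) / 2 := by
      rw [expecb_div2, expecb_cavg]
    rw [hTk, hTk1, ← expecb_sub]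
    calc expecb (fun x =>
        (cavg ((k:ℕ)+1) W x * Real.log (cavg ((k:ℕ)+1) W x)
          + cavg ((k:ℕ)+1) W (flipBit x k) * Real.log (cavg ((k:ℕ)+1) W (flipBit x k))) / 2
        - ((cavg ((k:ℕ)+1) W x + cavg ((k:ℕ)+1) W (flipBit x k))/2)
            * Real.log ((cavg ((k:ℕ)+1) W x + cavg ((k:ℕ)+1) W (flipBit x k))/2))
        ≤ expecb (fun x => cavg ((k:ℕ)+1) (fun y => (V y - V (flipBit y k))^2) x / 2) :=
          expecb_mono hpt
      _ = (1/2) * expecb (fun x => (V x - V (flipBit x k))^2) := by rw [hEC]; ring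
  have htel : ∑ k : Fin n,
      (expecb (fun x => cavg ((k:ℕ)+1) W x * Real.log (cavg ((k:ℕ)+1) W x))
        - expecb (fun x => cavg (k:ℕ) W x * Real.log (cavg (k:ℕ) W x)))
      = expecb (fun x => cavg n W x * Real.log (cavg n W x))
        - expecb (fun x => cavg 0 W x * Real.log (cavg 0 W x)) := by
    rw [Fin.sum_univ_eq_sum_range
      (fun i => expecb (fun x => cavg (i+1) W x * Real.log (cavg (i+1) W x))
        - expecb (fun x => cavg i W x * Real.log (cavg i W x))) n]
    exact Finset.sum_range_sub
      (fun i => expecb (fun x => cavg i W x * Real.log (cavg i W x))) n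
  have hn : expecb (fun x => cavg n W x * Real.log (cavg n W x))
      = expecb (fun x => W x * Real.log (W x)) := by
    apply congrArg
    funext x
    rw [cavg_ge le_rfl]
  have h0 : expecb (fun x => cavg 0 W x * Real.log (cavg 0 W x))
      = expecb W * Real.log (expecb W) := by
    have he : (fun x : Fin n → Fin 2 => cavg 0 W x * Real.log (cavg 0 W x))
        = fun _ => expecb W * Real.log (expecb W) := by
      funext x
      rw [cavg_zero]
    rw [he, expecb_const]
  have hent : ent (fun x => (V x)^2)
      = ∑ k : Fin n,
        (expecb (fun x => cavg ((k:ℕ)+1) W x * Real.log (cavg ((k:ℕ)+1) W x))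
          - expecb (fun x => cavg (k:ℕ) W x * Real.log (cavg (k:ℕ) W x))) := by
    rw [htel, hn, h0]
    rfl
  rw [hent]
  calc ∑ k : Fin n,
      (expecb (fun x => cavg ((k:ℕ)+1) W x * Real.log (cavg ((k:ℕ)+1) W x))
        - expecb (fun x => cavg (k:ℕ) W x * Real.log (cavg (k:ℕ) W x)))
      ≤ ∑ k : Fin n, (1/2) * expecb (fun x => (V x - V (flipBit x k))^2) :=
        Finset.sum_le_sum fun k _ => step k
    _ = (1/2) * ∑ k : Fin n, expecb (fun x => (V x - V (flipBit x k))^2) := by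
        rw [Finset.mul_sum]

end StmtAux

namespace StmtAux

variable {n : ℕ}

lemma expecb_const_mul (a : ℝ) (u : (Fin n → Fin 2) → ℝ) :
    expecb (fun x => a * u x) = a * expecb u := by
  unfold expecb
  rw [← Finset.mul_sum]
  ring

lemma expecb_pos_of_ne {u : (Fin n → Fin 2) → ℝ} (hnn : ∀ x, 0 ≤ u x)
    (x₀ : Fin n → Fin 2) (h : 0 < u x₀) : 0 < expecb u := by
  unfold expecb
  have : (0:ℝ) < ∑ x, u x :=
    Finset.sum_pos' (fun x _ => hnn x) ⟨x₀, Finset.mem_univ x₀, h⟩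
  positivity

lemma exists_ne_of_expecb_sq_pos {u : (Fin n → Fin 2) → ℝ}
    (h : 0 < expecb (fun x => (u x)^2)) : ∃ x₀, u x₀ ≠ 0 := by
  by_contra hc
  push_neg at hc
  have : expecb (fun x : Fin n → Fin 2 => (u x)^2) = 0 := by
    have he : (fun x : Fin n → Fin 2 => (u x)^2) = fun _ => (0:ℝ) := by
      funext x
      rw [hc x]
      ring
    rw [he, expecb_const]
  rw [this] at h
  exact lt_irrefl 0 h

lemma expecb_abs_pos {u : (Fin n → Fin 2) → ℝ}
    (h : 0 < expecb (fun x => (u x)^2)) : 0 < expecb (fun x => |u x|) := by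
  obtain ⟨x₀, hx₀⟩ := exists_ne_of_expecb_sq_pos h
  exact expecb_pos_of_ne (fun x => abs_nonneg _) x₀ (abs_pos.2 hx₀)

lemma expecb_abs_sq_le (u : (Fin n → Fin 2) → ℝ) :
    (expecb (fun x => |u x|))^2 ≤ expecb (fun x => (u x)^2) := by
  unfold expecb
  rw [div_pow]
  have hcard : ((2:ℝ)^n)^2 = 2^n * 2^n := by ring
  have hCS : (∑ x, |u x|)^2 ≤ (2^n : ℝ) * ∑ x, (u x)^2 := by
    have := sq_sum_le_card_mul_sum_sq (s := (Finset.univ : Finset (Fin n → Fin 2)))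
      (f := fun x => |u x|)
    have hc : ((Finset.univ : Finset (Fin n → Fin 2)).card : ℝ) = 2^n := by
      simp [Finset.card_univ]
    rw [hc] at this
    calc (∑ x, |u x|)^2 ≤ (2^n : ℝ) * ∑ x, |u x|^2 := this
      _ = (2^n : ℝ) * ∑ x, (u x)^2 := by
          congr 1
          exact Finset.sum_congr rfl fun x _ => sq_abs (u x)
  rw [hcard]
  rw [div_le_div_iff₀ (by positivity) (by positivity)]
  calc (∑ x, |u x|)^2 * (2^n : ℝ) ≤ ((2^n : ℝ) * ∑ x, (u x)^2) * 2^n := by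
        apply mul_le_mul_of_nonneg_right hCS (by positivity)
    _ = (∑ x, (u x)^2) * (2^n * 2^n) := by ring

/-- L¹–L² lower bound for the entropy. -/
lemma ent_ge_l1l2 {h : (Fin n → Fin 2) → ℝ} (hpos : 0 < expecb (fun x => (h x)^2)) :
    expecb (fun x => (h x)^2)
        * Real.log (expecb (fun x => (h x)^2) / (expecb (fun x => |h x|))^2)
      ≤ ent (fun x => (h x)^2) := by
  set m := expecb (fun x => (h x)^2) with hm
  set c := expecb (fun x => |h x|) with hc
  have hcpos : 0 < c := expecb_abs_pos hpos
  have key : ∀ x, 2*(h x)^2 - 2*(m/c)*|h x|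
      ≤ (h x)^2 * Real.log ((h x)^2) + (Real.log (c^2/m^2)) * (h x)^2 := by
    intro x
    rcases eq_or_ne (h x) 0 with h0 | h0
    · rw [h0]
      norm_num
    · have habs : 0 < |h x| := abs_pos.2 h0
      have ht : (0:ℝ) < |h x| * c / m := by positivity
      have hlog := one_sub_inv_le_log ht
      have hinvt : 1/(|h x| * c / m) = m / (|h x| * c) := by
        field_simp
      rw [hinvt] at hlog
      have hmult := mul_le_mul_of_nonneg_left hlog (by positivity : (0:ℝ) ≤ 2 * (h x)^2)
      have hsqabs : (h x)^2 = |h x|^2 := (sq_abs (h x)).symm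
      have hlog2 : 2 * (h x)^2 * Real.log (|h x| * c / m)
          = (h x)^2 * Real.log ((h x)^2) + Real.log (c^2/m^2) * (h x)^2 := by
        have hexp : Real.log (|h x| * c / m) * 2
            = Real.log ((h x)^2) + Real.log (c^2/m^2) := by
          rw [Real.log_div (by positivity) (ne_of_gt hpos),
            Real.log_mul (ne_of_gt habs) (ne_of_gt hcpos),
            Real.log_div (by positivity) (by positivity),
            show Real.log ((h x)^2) = Real.log (|h x|^2) by rw [← hsqabs],
            Real.log_pow, Real.log_pow, Real.log_pow]
          push_cast
          ring
        nlinarith [hexp]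
      have hlhs : 2 * (h x)^2 * (1 - m / (|h x| * c)) = 2*(h x)^2 - 2*(m/c)*|h x| := by
        have : (h x)^2 = |h x| * |h x| := by rw [← sq_abs]; ring
        field_simp
        rw [this]
        ring
      rw [hlhs, hlog2] at hmult
      exact hmult
  have hsum := expecb_mono key
  have hL : expecb (fun x => 2*(h x)^2 - 2*(m/c)*|h x|) = 0 := by
    rw [expecb_sub, expecb_const_mul, expecb_const_mul, ← hm, ← hc]
    field_simp
    ring
  have hR : expecb (fun x => (h x)^2 * Real.log ((h x)^2) + (Real.log (c^2/m^2)) * (h x)^2)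
      = expecb (fun x => (h x)^2 * Real.log ((h x)^2)) + Real.log (c^2/m^2) * m := by
    rw [expecb_add, expecb_const_mul, ← hm]
  rw [hL, hR] at hsum
  unfold ent
  rw [← hm]
  have hlogs : Real.log (m / c^2) = Real.log m - 2 * Real.log c := by
    rw [Real.log_div (ne_of_gt hpos) (by positivity), Real.log_pow]
    push_cast
    ring
  have hlogs2 : Real.log (c^2/m^2) = 2 * Real.log c - 2 * Real.log m := by
    rw [Real.log_div (by positivity) (by positivity), Real.log_pow, Real.log_pow]
    push_cast
    ring
  rw [hlogs]
  rw [hlogs2] at hsum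
  nlinarith [hsum]

/-- Entropy of a square is nonnegative. -/
lemma ent_sq_nonneg (V : (Fin n → Fin 2) → ℝ) : 0 ≤ ent (fun x => (V x)^2) := by
  rcases le_or_gt (expecb (fun x => (V x)^2)) 0 with h | h
  · -- V ≡ 0
    have hz : ∀ x, V x = 0 := by
      by_contra hc
      push_neg at hc
      obtain ⟨x₀, hx₀⟩ := hc
      have := expecb_pos_of_ne (u := fun x => (V x)^2) (fun x => sq_nonneg _) x₀
        (by positivity)
      linarith
    have he : (fun x : Fin n → Fin 2 => (V x)^2) = fun _ => (0:ℝ) := by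
      funext x; rw [hz x]; ring
    unfold ent
    rw [he]
    rw [show (fun x : Fin n → Fin 2 => (0:ℝ) * Real.log 0) = fun _ => (0:ℝ) by
      funext x; ring]
    have h0 : (expecb fun _ : Fin n → Fin 2 => (0:ℝ)) = 0 := expecb_const 0
    rw [h0]
    simp
  · have hl := ent_ge_l1l2 (h := V) h
    refine le_trans ?_ hl
    apply mul_nonneg (le_of_lt h)
    apply Real.log_nonneg
    have habs := expecb_abs_sq_le V
    have hcpos : 0 < (expecb (fun x => |V x|))^2 := by
      have := expecb_abs_pos h
      positivity
    rw [le_div_iff₀ hcpos]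
    linarith
end StmtAux

namespace StmtAux

variable {n : ℕ}

lemma Vd_delta (j k : Fin n) (g : (Fin n → Fin 2) → ℝ) (x : Fin n → Fin 2) :
    Vd k g x - Vd k g (flipBit x j) = Vd k (fun y => g y - g (flipBit y j)) x := by
  unfold Vd
  rw [cavg_flip ((k:ℕ)+1) j g, cavg_flip (k:ℕ) j g, cavg_sub, cavg_sub]
  ring

/-- Sum of entropies of martingale differences is controlled by the Dirichlet form. -/
lemma sum_ent_le (g : (Fin n → Fin 2) → ℝ) :
    ∑ k : Fin n, ent (fun x => (Vd k g x)^2)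
      ≤ (1/2) * ∑ j : Fin n, expecb (fun x => (g x - g (flipBit x j))^2) := by
  have h1 : ∀ k : Fin n, ent (fun x => (Vd k g x)^2)
      ≤ (1/2) * ∑ j : Fin n, expecb (fun x => (Vd k g x - Vd k g (flipBit x j))^2) :=
    fun k => ent_sq_le (Vd k g)
  calc ∑ k : Fin n, ent (fun x => (Vd k g x)^2)
      ≤ ∑ k : Fin n, (1/2) * ∑ j : Fin n,
          expecb (fun x => (Vd k g x - Vd k g (flipBit x j))^2) :=
        Finset.sum_le_sum fun k _ => h1 k
    _ = (1/2) * ∑ j : Fin n, ∑ k : Fin n,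
          expecb (fun x => (Vd k g x - Vd k g (flipBit x j))^2) := by
        rw [← Finset.mul_sum, Finset.sum_comm]
    _ ≤ (1/2) * ∑ j : Fin n, expecb (fun x => (g x - g (flipBit x j))^2) := by
        apply mul_le_mul_of_nonneg_left ?_ (by norm_num)
        apply Finset.sum_le_sum
        intro j _
        -- per j : martingale decomposition of Δⱼ g
        have hdec := var_decomp (fun y => g y - g (flipBit y j))
        have hrw : ∀ k : Fin n, expecb (fun x => (Vd k g x - Vd k g (flipBit x j))^2)
            = expecb (fun x => (Vd k (fun y => g y - g (flipBit y j)) x)^2) := by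
          intro k
          apply congrArg
          funext x
          rw [Vd_delta j k g x]
        calc ∑ k : Fin n, expecb (fun x => (Vd k g x - Vd k g (flipBit x j))^2)
            = ∑ k : Fin n, expecb (fun x => (Vd k (fun y => g y - g (flipBit y j)) x)^2) :=
              Finset.sum_congr rfl fun k _ => hrw k
          _ = expecb (fun x => (g x - g (flipBit x j))^2)
              - (expecb (fun y => g y - g (flipBit y j)))^2 := hdec.symm
          _ ≤ expecb (fun x => (g x - g (flipBit x j))^2) := by
              nlinarith [sq_nonneg (expecb (fun y => g y - g (flipBit y j)))]

/-- Falik–Samorodnitsky style inequality. -/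
lemma FS_main (g : (Fin n → Fin 2) → ℝ) {c : ℝ}
    (hb : ∑ k : Fin n, (expecb (fun x => |Vd k g x|))^2 ≤ c)
    (hvar : 0 < expecb (fun x => (g x)^2) - (expecb g)^2) :
    (expecb (fun x => (g x)^2) - (expecb g)^2)
        * Real.log ((expecb (fun x => (g x)^2) - (expecb g)^2) / c)
      ≤ (1/2) * ∑ j : Fin n, expecb (fun x => (g x - g (flipBit x j))^2) := by
  set Var := expecb (fun x => (g x)^2) - (expecb g)^2 with hVar
  set av : Fin n → ℝ := fun k => expecb (fun x => (Vd k g x)^2) with hav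
  set bv : Fin n → ℝ := fun k => (expecb (fun x => |Vd k g x|))^2 with hbv
  have hav0 : ∀ k, 0 ≤ av k := fun k => expecb_nonneg fun x => sq_nonneg _
  set K := Finset.univ.filter (fun k : Fin n => 0 < av k) with hK
  have hsumK : ∑ k ∈ K, av k = Var := by
    rw [hVar, var_decomp g, hK]
    apply Finset.sum_filter_of_ne
    intro k _ hk
    rcases eq_or_lt_of_le (hav0 k) with he | hp
    · exact absurd he.symm hk
    · exact hp
  have hKne : K.Nonempty := by
    by_contra hc
    rw [Finset.not_nonempty_iff_eq_empty] at hc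
    rw [hc, Finset.sum_empty] at hsumK
    rw [← hsumK] at hvar
    exact lt_irrefl 0 hvar
  have hbK : ∀ k ∈ K, 0 < bv k := by
    intro k hk
    rw [hK, Finset.mem_filter] at hk
    have := expecb_abs_pos (u := Vd k g) hk.2
    rw [hbv]
    positivity
  have haK : ∀ k ∈ K, 0 < av k := by
    intro k hk
    rw [hK, Finset.mem_filter] at hk
    exact hk.2
  -- log-sum inequality
  have hls := log_sum_ineq K av bv haK hbK hKne
  rw [hsumK] at hls
  -- per-k L1L2
  have hl1l2 : ∀ k ∈ K, av k * Real.log (av k / bv k) ≤ ent (fun x => (Vd k g x)^2) := by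
    intro k hk
    exact ent_ge_l1l2 (haK k hk)
  have hsument : ∑ k ∈ K, av k * Real.log (av k / bv k)
      ≤ ∑ k : Fin n, ent (fun x => (Vd k g x)^2) := by
    calc ∑ k ∈ K, av k * Real.log (av k / bv k)
        ≤ ∑ k ∈ K, ent (fun x => (Vd k g x)^2) := Finset.sum_le_sum hl1l2
      _ ≤ ∑ k : Fin n, ent (fun x => (Vd k g x)^2) := by
          apply Finset.sum_le_sum_of_subset_of_nonneg (Finset.filter_subset _ _)
          intro k _ _
          exact ent_sq_nonneg (Vd k g)
  -- compare against c
  have hbc : ∑ k ∈ K, bv k ≤ c := by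
    refine le_trans ?_ hb
    apply Finset.sum_le_sum_of_subset_of_nonneg (Finset.filter_subset _ _)
    intro k _ _
    exact sq_nonneg _
  have hbKpos : 0 < ∑ k ∈ K, bv k := Finset.sum_pos hbK hKne
  have hcpos : 0 < c := lt_of_lt_of_le hbKpos hbc
  have hmono : Var * Real.log (Var / c) ≤ Var * Real.log (Var / (∑ k ∈ K, bv k)) := by
    apply mul_le_mul_of_nonneg_left ?_ (le_of_lt hvar)
    apply Real.log_le_log (by positivity)
    apply div_le_div_of_nonneg_left (le_of_lt hvar) hbKpos hbc
  calc Var * Real.log (Var / c) ≤ Var * Real.log (Var / (∑ k ∈ K, bv k)) := hmono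
    _ ≤ ∑ k ∈ K, av k * Real.log (av k / bv k) := hls
    _ ≤ ∑ k : Fin n, ent (fun x => (Vd k g x)^2) := hsument
    _ ≤ (1/2) * ∑ j : Fin n, expecb (fun x => (g x - g (flipBit x j))^2) := sum_ent_le g

end StmtAux

namespace StmtAux

variable {n : ℕ}

lemma expecb_sum {ι : Type*} (s : Finset ι) (u : ι → (Fin n → Fin 2) → ℝ) :
    expecb (fun x => ∑ j ∈ s, u j x) = ∑ j ∈ s, expecb (u j) := by
  unfold expecb
  rw [← Finset.sum_div]
  congr 1
  exact Finset.sum_comm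

lemma expecb_CS (u w : (Fin n → Fin 2) → ℝ) :
    (expecb (fun x => u x * w x))^2
      ≤ expecb (fun x => (u x)^2) * expecb (fun x => (w x)^2) := by
  unfold expecb
  rw [div_pow, div_mul_div_comm]
  have hCS := Finset.sum_mul_sq_le_sq_mul_sq Finset.univ u w
  have h1 : ((2:ℝ)^n)^2 = 2^n * 2^n := by ring
  rw [h1]
  exact div_le_div_of_nonneg_right hCS (by positivity) |>.trans_eq rfl

/-- symmetrisation for squares of differences -/
lemma sq_diff_sym (u : (Fin n → Fin 2) → ℝ) (j : Fin n) :
    expecb (fun x => (u x - u (flipBit x j))^2)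
      = 2 * expecb (fun x => (max (-(u x - u (flipBit x j))) 0)^2) := by
  have hflip : expecb (fun x => (max (u x - u (flipBit x j)) 0)^2)
      = expecb (fun x => (max (-(u x - u (flipBit x j))) 0)^2) := by
    rw [← expecb_flip j (fun x => (max (u x - u (flipBit x j)) 0)^2)]
    apply congrArg
    funext x
    have hinv : flipBit (flipBit x j) j = x := flip_involutive j x
    rw [hinv, neg_sub]
  have hpt : ∀ x, (u x - u (flipBit x j))^2
      = (max (u x - u (flipBit x j)) 0)^2 + (max (-(u x - u (flipBit x j))) 0)^2 := by
    intro x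
    set t := u x - u (flipBit x j)
    rcases le_total t 0 with h | h
    · rw [max_eq_right h, max_eq_left (by linarith : (0:ℝ) ≤ -t)]
      ring
    · rw [max_eq_left h, max_eq_right (by linarith : -t ≤ (0:ℝ))]
      ring
  rw [show (fun x => (u x - u (flipBit x j))^2)
      = fun x => ((max (u x - u (flipBit x j)) 0)^2 + (max (-(u x - u (flipBit x j))) 0)^2)
      from funext hpt, expecb_add, hflip]
  ring

/-- symmetrisation for absolute differences -/
lemma abs_diff_sym (u : (Fin n → Fin 2) → ℝ) (j : Fin n) :
    expecb (fun x => |u x - u (flipBit x j)|)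
      = 2 * expecb (fun x => max (-(u x - u (flipBit x j))) 0) := by
  have hflip : expecb (fun x => max (u x - u (flipBit x j)) 0)
      = expecb (fun x => max (-(u x - u (flipBit x j))) 0) := by
    rw [← expecb_flip j (fun x => max (u x - u (flipBit x j)) 0)]
    apply congrArg
    funext x
    have hinv : flipBit (flipBit x j) j = x := flip_involutive j x
    rw [hinv, neg_sub]
  have hpt : ∀ x, |u x - u (flipBit x j)|
      = max (u x - u (flipBit x j)) 0 + max (-(u x - u (flipBit x j))) 0 := by
    intro x
    set t := u x - u (flipBit x j)
    rcases le_total t 0 with h | h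
    · rw [max_eq_right h, max_eq_left (by linarith : (0:ℝ) ≤ -t), abs_of_nonpos h]
      ring
    · rw [max_eq_left h, max_eq_right (by linarith : -t ≤ (0:ℝ)), abs_of_nonneg h]
      ring
  rw [show (fun x => |u x - u (flipBit x j)|)
      = fun x => (max (u x - u (flipBit x j)) 0 + max (-(u x - u (flipBit x j))) 0)
      from funext hpt, expecb_add, hflip]
  ring

/-- scalar clip lemmas -/
lemma clip_mono {a b s t : ℝ} (h : s ≤ t) : max a (min b s) ≤ max a (min b t) :=
  max_le_max le_rfl (min_le_min le_rfl h)

lemma clip_lipschitz (a b s t : ℝ) : |max a (min b s) - max a (min b t)| ≤ |s - t| := by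
  have h1 : |max a (min b s) - max a (min b t)| ≤ |min b s - min b t| := by
    rw [max_comm a (min b s), max_comm a (min b t)]
    exact abs_max_sub_max_le_abs _ _ _
  refine le_trans h1 ?_
  have h2 := abs_min_sub_min_le_max b s b t
  simpa using h2

lemma clip_negpart_le (a b s t : ℝ) :
    max (-(max a (min b s) - max a (min b t))) 0 ≤ max (-(s - t)) 0 := by
  rcases le_total s t with h | h
  · have hmono := clip_mono (a := a) (b := b) h
    have hlip := clip_lipschitz a b s t
    have habs : |max a (min b s) - max a (min b t)| = -(max a (min b s) - max a (min b t)) :=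
      abs_of_nonpos (by linarith)
    have habs2 : |s - t| = -(s - t) := abs_of_nonpos (by linarith)
    rw [habs, habs2] at hlip
    rw [max_eq_left (by linarith : (0:ℝ) ≤ -(max a (min b s) - max a (min b t))),
      max_eq_left (by linarith : (0:ℝ) ≤ -(s - t))]
    exact hlip
  · have hmono := clip_mono (a := a) (b := b) h
    rw [max_eq_right (by linarith : -(max a (min b s) - max a (min b t)) ≤ (0:ℝ))]
    exact le_max_right _ _

lemma clip_le_top {a b s : ℝ} (hab : a ≤ b) : max a (min b s) ≤ b :=
  max_le hab (min_le_left _ _)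

lemma clip_ge_bot (a b s : ℝ) : a ≤ max a (min b s) := le_max_left _ _

lemma clip_of_ge {a b s : ℝ} (hab : a ≤ b) (h : b ≤ s) : max a (min b s) = b := by
  rw [min_eq_left h, max_eq_right hab]

lemma clip_of_le {a b s : ℝ} (hab : a ≤ b) (h : s ≤ a) : max a (min b s) = a := by
  rw [min_eq_right (le_trans h hab), max_eq_left h]

end StmtAux

namespace StmtAux

variable {n : ℕ}

lemma prb_nonneg (P : (Fin n → Fin 2) → Prop) : 0 ≤ prb P := by
  unfold prb
  positivity

lemma prb_le_one (P : (Fin n → Fin 2) → Prop) : prb P ≤ 1 := by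
  unfold prb
  rw [div_le_one (by positivity)]
  have h1 : (Finset.univ.filter P).card ≤ (Finset.univ : Finset (Fin n → Fin 2)).card :=
    Finset.card_le_card (Finset.filter_subset _ _)
  have h2 : ((Finset.univ : Finset (Fin n → Fin 2)).card : ℝ) = 2^n := by
    simp [Finset.card_univ]
  calc ((Finset.univ.filter P).card : ℝ)
      ≤ ((Finset.univ : Finset (Fin n → Fin 2)).card : ℝ) := by exact_mod_cast h1
    _ = 2^n := h2

lemma prb_mono {P Q : (Fin n → Fin 2) → Prop} (h : ∀ x, P x → Q x) : prb P ≤ prb Q := by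
  unfold prb
  have h1 : (Finset.univ.filter P).card ≤ (Finset.univ.filter Q).card := by
    apply Finset.card_le_card
    intro x hx
    rw [Finset.mem_filter] at hx ⊢
    exact ⟨hx.1, h x hx.2⟩
  have h2 : ((Finset.univ.filter P).card : ℝ) ≤ ((Finset.univ.filter Q).card : ℝ) := by
    exact_mod_cast h1
  exact div_le_div_of_nonneg_right h2 (by positivity)

/-- real-valued indicator -/
noncomputable def indD (P : (Fin n → Fin 2) → Prop) (x : Fin n → Fin 2) : ℝ :=
  if P x then 1 else 0

lemma indD_nonneg (P : (Fin n → Fin 2) → Prop) (x : Fin n → Fin 2) : 0 ≤ indD P x := by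
  unfold indD
  split <;> norm_num

lemma indD_of_pos {P : (Fin n → Fin 2) → Prop} {x : Fin n → Fin 2} (h : P x) :
    indD P x = 1 := by
  unfold indD
  rw [if_pos h]

lemma indD_of_neg {P : (Fin n → Fin 2) → Prop} {x : Fin n → Fin 2} (h : ¬ P x) :
    indD P x = 0 := by
  unfold indD
  rw [if_neg h]

lemma expecb_indD (P : (Fin n → Fin 2) → Prop) : expecb (indD P) = prb P := by
  unfold expecb prb indD
  congr 1
  rw [Finset.sum_boole]

lemma expecb_indD_mul (P : (Fin n → Fin 2) → Prop) (v : ℝ) :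
    expecb (fun x => indD P x * v) = v * prb P := by
  rw [show (fun x => indD P x * v) = fun x => v * indD P x from funext fun x => mul_comm _ _,
    expecb_const_mul, expecb_indD]

section ClipStuff

variable {f : (Fin n → Fin 2) → ℝ} {v a b B : ℝ}

/-- outside the window `D`, the clipped function has no negative gradient part -/
lemma clip_negpart_zero (hab : a ≤ b) (hB0 : 0 ≤ B)
    (hBb : ∀ (x : Fin n → Fin 2) (j : Fin n), |f x - f (flipBit x j)| ≤ B)
    (x : Fin n → Fin 2) (k : Fin n) (hD : ¬(a - B < f x ∧ f x < b)) :
    max (-(max a (min b (f x)) - max a (min b (f (flipBit x k))))) 0 = 0 := by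
  apply max_eq_right
  rw [neg_nonpos, sub_nonneg]
  rcases le_or_gt (f x) (a - B) with hlow | hhigh
  · have h1 : f (flipBit x k) ≤ a := by
      have h3 : |f x - f (flipBit x k)| ≤ B := hBb x k
      nlinarith [abs_le.1 h3]
    rw [clip_of_le hab h1, clip_of_le hab (by linarith : f x ≤ a)]
  · have hfb : b ≤ f x := by
      by_contra hc
      push_neg at hc
      exact hD ⟨hhigh, hc⟩
    rw [clip_of_ge hab hfb]
    exact clip_le_top hab

lemma grad_pointwise (hab : a ≤ b) (hB0 : 0 ≤ B)
    (hBb : ∀ (x : Fin n → Fin 2) (j : Fin n), |f x - f (flipBit x j)| ≤ B)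
    (hcond : ∀ x, ∑ j, (max (-(f x - f (flipBit x j))) 0) ^ 2 ≤ v)
    (x : Fin n → Fin 2) :
    ∑ j, (max (-(max a (min b (f x)) - max a (min b (f (flipBit x j))))) 0)^2
      ≤ indD (fun y => a - B < f y ∧ f y < b) x * v := by
  by_cases hD : a - B < f x ∧ f x < b
  · rw [indD_of_pos hD, one_mul]
    refine le_trans ?_ (hcond x)
    apply Finset.sum_le_sum
    intro j _
    have hle := clip_negpart_le a b (f x) (f (flipBit x j))
    have h0 : (0:ℝ) ≤ max (-(max a (min b (f x)) - max a (min b (f (flipBit x j))))) 0 :=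
      le_max_right _ _
    exact pow_le_pow_left₀ h0 hle 2
  · rw [indD_of_neg hD, zero_mul]
    apply le_of_eq
    apply Finset.sum_eq_zero
    intro j _
    rw [clip_negpart_zero hab hB0 hBb x j hD]
    ring

/-- Dirichlet form bound for the clipped function. -/
lemma dirichlet_bound (hab : a ≤ b) (hB0 : 0 ≤ B)
    (hBb : ∀ (x : Fin n → Fin 2) (j : Fin n), |f x - f (flipBit x j)| ≤ B)
    (hcond : ∀ x, ∑ j, (max (-(f x - f (flipBit x j))) 0) ^ 2 ≤ v) :
    ∑ j : Fin n, expecb (fun x =>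
        ((max a (min b (f x))) - (max a (min b (f (flipBit x j)))))^2)
      ≤ 2 * (v * prb (fun x => a - B < f x ∧ f x < b)) := by
  have h1 : ∀ j : Fin n, expecb (fun x =>
      ((max a (min b (f x))) - (max a (min b (f (flipBit x j)))))^2)
      = 2 * expecb (fun x =>
        (max (-(max a (min b (f x)) - max a (min b (f (flipBit x j))))) 0)^2) :=
    fun j => sq_diff_sym (fun y => max a (min b (f y))) j
  calc ∑ j : Fin n, expecb (fun x =>
        ((max a (min b (f x))) - (max a (min b (f (flipBit x j)))))^2)
      = 2 * ∑ j : Fin n, expecb (fun x =>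
          (max (-(max a (min b (f x)) - max a (min b (f (flipBit x j))))) 0)^2) := by
        rw [Finset.mul_sum]
        exact Finset.sum_congr rfl fun j _ => h1 j
    _ = 2 * expecb (fun x => ∑ j : Fin n,
          (max (-(max a (min b (f x)) - max a (min b (f (flipBit x j))))) 0)^2) := by
        rw [expecb_sum]
    _ ≤ 2 * expecb (fun x => indD (fun y => a - B < f y ∧ f y < b) x * v) := by
        have := expecb_mono (grad_pointwise (f := f) hab hB0 hBb hcond)
        linarith
    _ = 2 * (v * prb (fun x => a - B < f x ∧ f x < b)) := by
        rw [expecb_indD_mul]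

lemma Vd_as_cavg (k : Fin n) (g : (Fin n → Fin 2) → ℝ) (x : Fin n → Fin 2) :
    Vd k g x = cavg ((k:ℕ)+1) (fun y => g y - g (flipBit y k)) x / 2 := by
  rw [Vd_eq_half, cavg_flip ((k:ℕ)+1) k g x, cavg_sub]

/-- FS denominator bound. -/
lemma W_bound (hab : a ≤ b) (hB0 : 0 ≤ B) (hv : 0 ≤ v)
    (hBb : ∀ (x : Fin n → Fin 2) (j : Fin n), |f x - f (flipBit x j)| ≤ B)
    (hcond : ∀ x, ∑ j, (max (-(f x - f (flipBit x j))) 0) ^ 2 ≤ v) :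
    ∑ k : Fin n, (expecb (fun x => |Vd k (fun y => max a (min b (f y))) x|))^2
      ≤ v * (prb (fun x => a - B < f x ∧ f x < b))^2 := by
  set D := fun y : Fin n → Fin 2 => a - B < f y ∧ f y < b with hD
  -- step 1 : E|Vd k gc| ≤ E[ind * r k]
  have step1 : ∀ k : Fin n,
      expecb (fun x => |Vd k (fun y => max a (min b (f y))) x|)
      ≤ expecb (fun x => indD D x * max (-(f x - f (flipBit x k))) 0) := by
    intro k
    have habs : ∀ x, |Vd k (fun y => max a (min b (f y))) x|
        ≤ cavg ((k:ℕ)+1) (fun y =>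
            |max a (min b (f y)) - max a (min b (f (flipBit y k)))|) x / 2 := by
      intro x
      rw [Vd_as_cavg k _ x, abs_div]
      rw [show |(2:ℝ)| = 2 by norm_num]
      have := abs_cavg_le ((k:ℕ)+1)
        (fun y => max a (min b (f y)) - max a (min b (f (flipBit y k)))) x
      linarith
    have hE1 := expecb_mono habs
    have hE2 : expecb (fun x => cavg ((k:ℕ)+1) (fun y =>
          |max a (min b (f y)) - max a (min b (f (flipBit y k)))|) x / 2)
        = expecb (fun x => |max a (min b (f x)) - max a (min b (f (flipBit x k)))|) / 2 := by
      rw [expecb_div2, expecb_cavg]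
    have hE3 : expecb (fun x => |max a (min b (f x)) - max a (min b (f (flipBit x k)))|)
        = 2 * expecb (fun x =>
            max (-(max a (min b (f x)) - max a (min b (f (flipBit x k))))) 0) :=
      abs_diff_sym (fun y => max a (min b (f y))) k
    have hE4 : expecb (fun x =>
          max (-(max a (min b (f x)) - max a (min b (f (flipBit x k))))) 0)
        ≤ expecb (fun x => indD D x * max (-(f x - f (flipBit x k))) 0) := by
      apply expecb_mono
      intro x
      by_cases hDx : D x
      · rw [indD_of_pos hDx, one_mul]
        exact clip_negpart_le a b (f x) (f (flipBit x k))
      · rw [indD_of_neg hDx, zero_mul, clip_negpart_zero hab hB0 hBb x k hDx]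
    linarith
  -- step 2 : squares via Cauchy-Schwarz
  have step2 : ∀ k : Fin n,
      (expecb (fun x => |Vd k (fun y => max a (min b (f y))) x|))^2
      ≤ prb D * expecb (fun x => indD D x * (max (-(f x - f (flipBit x k))) 0)^2) := by
    intro k
    have h0 : 0 ≤ expecb (fun x => |Vd k (fun y => max a (min b (f y))) x|) :=
      expecb_nonneg fun x => abs_nonneg _
    have h1 := pow_le_pow_left₀ h0 (step1 k) 2
    refine le_trans h1 ?_
    have hCS := expecb_CS (indD D) (fun x => indD D x * max (-(f x - f (flipBit x k))) 0)
    have he1 : (fun x => indD D x * (indD D x * max (-(f x - f (flipBit x k))) 0))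
        = fun x => indD D x * max (-(f x - f (flipBit x k))) 0 := by
      funext x
      by_cases hDx : D x
      · rw [indD_of_pos hDx]; ring
      · rw [indD_of_neg hDx]; ring
    have he2 : (fun x => (indD D x)^2) = indD D := by
      funext x
      by_cases hDx : D x
      · rw [indD_of_pos hDx]; norm_num
      · rw [indD_of_neg hDx]; norm_num
    have he3 : (fun x => (indD D x * max (-(f x - f (flipBit x k))) 0)^2)
        = fun x => indD D x * (max (-(f x - f (flipBit x k))) 0)^2 := by
      funext x
      by_cases hDx : D x
      · rw [indD_of_pos hDx]; ring
      · rw [indD_of_neg hDx]; ring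
    rw [he1, he2, he3, expecb_indD] at hCS
    exact hCS
  -- step 3 : sum up
  calc ∑ k : Fin n, (expecb (fun x => |Vd k (fun y => max a (min b (f y))) x|))^2
      ≤ ∑ k : Fin n, prb D * expecb (fun x => indD D x * (max (-(f x - f (flipBit x k))) 0)^2) :=
        Finset.sum_le_sum fun k _ => step2 k
    _ = prb D * expecb (fun x => indD D x * ∑ k : Fin n, (max (-(f x - f (flipBit x k))) 0)^2) := by
        rw [← Finset.mul_sum, ← expecb_sum]
        congr 2
        funext x
        rw [Finset.mul_sum]
    _ ≤ prb D * expecb (fun x => indD D x * v) := by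
        apply mul_le_mul_of_nonneg_left ?_ (prb_nonneg _)
        apply expecb_mono
        intro x
        exact mul_le_mul_of_nonneg_left (hcond x) (indD_nonneg D x)
    _ = v * (prb D)^2 := by
        rw [expecb_indD_mul]
        ring

end ClipStuff

end StmtAux

namespace StmtAux

variable {n : ℕ}

lemma W_pos (g : (Fin n → Fin 2) → ℝ)
    (hvar : 0 < expecb (fun x => (g x)^2) - (expecb g)^2) :
    0 < ∑ k : Fin n, (expecb (fun x => |Vd k g x|))^2 := by
  have hdec := var_decomp g
  have hex : ∃ k : Fin n, 0 < expecb (fun x => (Vd k g x)^2) := by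
    by_contra hc
    push_neg at hc
    have hle : ∑ k : Fin n, expecb (fun x => (Vd k g x)^2) ≤ 0 :=
      Finset.sum_nonpos fun k _ => hc k
    rw [← hdec] at hle
    linarith
  obtain ⟨k, hk⟩ := hex
  have h1 : 0 < (expecb (fun x => |Vd k g x|))^2 := by
    have := expecb_abs_pos hk
    positivity
  exact Finset.sum_pos' (fun i _ => sq_nonneg _) ⟨k, Finset.mem_univ k, h1⟩

lemma var_eq_double (g : (Fin n → Fin 2) → ℝ) :
    expecb (fun x => (g x)^2) - (expecb g)^2
      = (∑ x, ∑ y, (g x - g y)^2) / (2 * ((2:ℝ)^n) * 2^n) := by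
  have hc : ((Finset.univ : Finset (Fin n → Fin 2)).card : ℝ) = 2^n := by
    simp [Finset.card_univ]
  have key : ∑ x, ∑ y, (g x - g y)^2
      = (2^n : ℝ) * (∑ x, (g x)^2) + (2^n : ℝ) * (∑ x, (g x)^2)
        - 2 * ((∑ x, g x) * (∑ x, g x)) := by
    have h1 : ∑ x, ∑ y, (g x - g y)^2
        = ∑ x, ((2^n:ℝ) * (g x)^2 + (∑ y, (g y)^2) - 2 * (g x * ∑ y, g y)) := by
      apply Finset.sum_congr rfl
      intro x _
      have h2 : ∑ y, (g x - g y)^2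
          = ∑ y, ((g x)^2 + (g y)^2 - 2 * (g x * g y)) := by
        apply Finset.sum_congr rfl
        intro y _
        ring
      rw [h2, Finset.sum_sub_distrib, Finset.sum_add_distrib, Finset.sum_const,
        nsmul_eq_mul, ← Finset.mul_sum, ← Finset.mul_sum, hc]
    rw [h1, Finset.sum_sub_distrib, Finset.sum_add_distrib, Finset.sum_const,
      nsmul_eq_mul, ← Finset.mul_sum, ← Finset.mul_sum, ← Finset.sum_mul, hc]
  unfold expecb
  rw [key]
  have h2n : (0:ℝ) < 2^n := by positivity
  field_simp
  ring

lemma var_lower {f : (Fin n → Fin 2) → ℝ} {a b : ℝ} (hab : a < b) :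
    (b - a)^2 * prb (fun x => b ≤ f x) * prb (fun x => f x ≤ a)
      ≤ expecb (fun x => (max a (min b (f x)))^2)
        - (expecb (fun x => max a (min b (f x))))^2 := by
  have hab' : a ≤ b := le_of_lt hab
  rw [var_eq_double (fun x => max a (min b (f x)))]
  set Af := Finset.univ.filter (fun x : Fin n → Fin 2 => b ≤ f x) with hAf
  set Lf := Finset.univ.filter (fun x : Fin n → Fin 2 => f x ≤ a) with hLf
  have hdisj : Disjoint (Af ×ˢ Lf) (Lf ×ˢ Af) := by
    rw [Finset.disjoint_left]
    intro p hp1 hp2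
    rw [Finset.mem_product] at hp1 hp2
    rw [hAf, Finset.mem_filter] at hp1
    rw [hLf, Finset.mem_filter] at hp2
    have h1 := hp1.1.2
    have h2 := hp2.1.2
    linarith
  have hsub : (Af ×ˢ Lf) ∪ (Lf ×ˢ Af) ⊆ Finset.univ ×ˢ Finset.univ := by
    intro p _
    rw [Finset.mem_product]
    exact ⟨Finset.mem_univ _, Finset.mem_univ _⟩
  have hdouble : ∑ p ∈ (Af ×ˢ Lf) ∪ (Lf ×ˢ Af),
      (max a (min b (f p.1)) - max a (min b (f p.2)))^2
      ≤ ∑ x, ∑ y, (max a (min b (f x)) - max a (min b (f y)))^2 := by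
    rw [← Finset.sum_product' (s := (Finset.univ : Finset (Fin n → Fin 2)))
      (t := (Finset.univ : Finset (Fin n → Fin 2)))
      (f := fun x y => (max a (min b (f x)) - max a (min b (f y)))^2)]
    apply Finset.sum_le_sum_of_subset_of_nonneg hsub
    intro p _ _
    positivity
  have hval : ∀ p ∈ (Af ×ˢ Lf) ∪ (Lf ×ˢ Af),
      (b - a)^2 ≤ (max a (min b (f p.1)) - max a (min b (f p.2)))^2 := by
    intro p hp
    rcases Finset.mem_union.1 hp with hp | hp
    · rw [Finset.mem_product] at hp
      have h1 : b ≤ f p.1 := by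
        have := hp.1
        rw [hAf, Finset.mem_filter] at this
        exact this.2
      have h2 : f p.2 ≤ a := by
        have := hp.2
        rw [hLf, Finset.mem_filter] at this
        exact this.2
      rw [clip_of_ge hab' h1, clip_of_le hab' h2]
    · rw [Finset.mem_product] at hp
      have h1 : f p.1 ≤ a := by
        have := hp.1
        rw [hLf, Finset.mem_filter] at this
        exact this.2
      have h2 : b ≤ f p.2 := by
        have := hp.2
        rw [hAf, Finset.mem_filter] at this
        exact this.2
      rw [clip_of_le hab' h1, clip_of_ge hab' h2,
        show (a - b)^2 = (b - a)^2 by ring]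
  have hcount : (((Af.card * Lf.card : ℕ) + (Lf.card * Af.card : ℕ) : ℕ) : ℝ) * (b-a)^2
      ≤ ∑ p ∈ (Af ×ˢ Lf) ∪ (Lf ×ˢ Af),
        (max a (min b (f p.1)) - max a (min b (f p.2)))^2 := by
    have := Finset.sum_le_sum hval
    have hconst : ∑ _p ∈ (Af ×ˢ Lf) ∪ (Lf ×ˢ Af), (b-a)^2
        = (((Af ×ˢ Lf) ∪ (Lf ×ˢ Af)).card : ℝ) * (b-a)^2 := by
      rw [Finset.sum_const, nsmul_eq_mul]
    have hcard : ((Af ×ˢ Lf) ∪ (Lf ×ˢ Af)).card = Af.card * Lf.card + Lf.card * Af.card := by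
      rw [Finset.card_union_of_disjoint hdisj, Finset.card_product, Finset.card_product]
    rw [hconst, hcard] at this
    exact_mod_cast this
  -- assemble
  rw [le_div_iff₀ (by positivity : (0:ℝ) < 2 * (2:ℝ)^n * 2^n)]
  have heq : (b - a)^2 * prb (fun x => b ≤ f x) * prb (fun x => f x ≤ a)
      * (2 * (2:ℝ)^n * 2^n)
      = (((Af.card * Lf.card : ℕ) + (Lf.card * Af.card : ℕ) : ℕ) : ℝ) * (b-a)^2 := by
    unfold prb
    rw [← hAf, ← hLf]
    push_cast
    have h2n : (0:ℝ) < 2^n := by positivity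
    field_simp
    ring
  rw [heq]
  exact le_trans hcount hdouble

/-- The median bound: `P(f ≤ a) ≥ 1/2` when `a` is at least the median. -/
lemma median_half {f : (Fin n → Fin 2) → ℝ} {a : ℝ} (ha : quant f (1/2) ≤ a) :
    (1/2 : ℝ) ≤ prb (fun x => f x ≤ a) := by
  by_contra hcon
  push_neg at hcon
  have hx₀ : ∃ x₀ : Fin n → Fin 2, True := ⟨fun _ => 0, trivial⟩
  obtain ⟨x₀, -⟩ := hx₀
  have himg : (Finset.univ.image f).Nonempty :=
    ⟨f x₀, Finset.mem_image_of_mem f (Finset.mem_univ x₀)⟩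
  set z₀ := (Finset.univ.image f).max' himg with hz₀def
  have hone : ∀ c : ℝ, (∀ x : Fin n → Fin 2, f x ≤ c) → prb (fun x => f x ≤ c) = 1 := by
    intro c hc
    unfold prb
    have heq : Finset.univ.filter (fun x : Fin n → Fin 2 => f x ≤ c) = Finset.univ := by
      apply Finset.filter_true_of_mem
      intro x _
      exact hc x
    rw [heq]
    have h2 : ((Finset.univ : Finset (Fin n → Fin 2)).card : ℝ) = 2^n := by
      simp [Finset.card_univ]
    rw [h2]
    field_simp
  have hz₀ : (1/2 : ℝ) ≤ prb (fun x => f x ≤ z₀) := by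
    rw [hone z₀ (fun x => Finset.le_max' _ _ (Finset.mem_image_of_mem f (Finset.mem_univ x)))]
    norm_num
  set T := Finset.univ.filter (fun x : Fin n → Fin 2 => a < f x) with hT
  have hTne : T.Nonempty := by
    by_contra hTe
    rw [Finset.not_nonempty_iff_eq_empty] at hTe
    have hall : ∀ x : Fin n → Fin 2, f x ≤ a := by
      intro x
      by_contra hgt
      push_neg at hgt
      have hxT : x ∈ T := by
        rw [hT, Finset.mem_filter]
        exact ⟨Finset.mem_univ x, hgt⟩
      rw [hTe] at hxT
      exact absurd hxT (Finset.notMem_empty x)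
    rw [hone a hall] at hcon
    linarith
  set ε := (T.image (fun x => f x - a)).min' (hTne.image _) with hεdef
  have hε : 0 < ε := by
    have hmem := Finset.min'_mem (T.image (fun x => f x - a)) (hTne.image _)
    rw [Finset.mem_image] at hmem
    obtain ⟨x, hx, hxe⟩ := hmem
    rw [hT, Finset.mem_filter] at hx
    rw [hεdef, ← hxe]
    linarith [hx.2]
  have hSe : ∀ z ∈ {z : ℝ | 1/2 ≤ prb fun x => f x ≤ z}, a + ε ≤ z := by
    intro z hz
    by_contra hlt
    push_neg at hlt
    have hsub : prb (fun x => f x ≤ z) ≤ prb (fun x => f x ≤ a) := by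
      apply prb_mono
      intro x hxz
      by_contra hgt
      push_neg at hgt
      have hxT : x ∈ T := by
        rw [hT, Finset.mem_filter]
        exact ⟨Finset.mem_univ x, hgt⟩
      have hεle : ε ≤ f x - a := by
        rw [hεdef]
        exact Finset.min'_le _ _ (Finset.mem_image_of_mem _ hxT)
      linarith
    rw [Set.mem_setOf_eq] at hz
    linarith
  have hinf : a + ε ≤ quant f (1/2) := by
    unfold quant
    exact le_csInf ⟨z₀, hz₀⟩ hSe
  linarith

end StmtAux

namespace StmtAux

set_option maxHeartbeats 1000000 in
/-- the final arithmetic endgame -/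
lemma endgame {Var v p q θ L : ℝ} (hv : 0 < v) (hq : 0 < q) (hθ : 0 < θ)
    (hp0 : 0 < p) (hp1 : p ≤ 1) (hL : L = 2 - Real.log (2*p))
    (hVlow : θ^2 * q * (1/2) ≤ Var)
    (hkey : Var * Real.log (Var/(v*p^2)) ≤ v * p) :
    θ^2 * q * L ≤ (72/5) * v * p := by
  have hlog2 : Real.log 2 < 0.6931471808 := Real.log_two_lt_d9
  have hL0 : 0 < L := by
    have h2p : Real.log (2*p) ≤ Real.log 2 := by
      apply Real.log_le_log (by positivity)
      linarith
    rw [hL]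
    linarith
  have hLp : L * p ≤ 5/2 := by
    have hlb := one_sub_inv_le_log (t := 2*p) (by positivity)
    have h1 : 2 - Real.log (2*p) ≤ 1 + 1/(2*p) := by linarith
    have h2 : (2 - Real.log (2*p)) * p ≤ (1 + 1/(2*p)) * p :=
      mul_le_mul_of_nonneg_right h1 (le_of_lt hp0)
    have h3 : (1 + 1/(2*p)) * p = p + 1/2 := by
      field_simp
    rw [hL]
    rw [h3] at h2
    linarith [hp1]
  by_contra hcon
  push_neg at hcon
  have hvp2 : 0 < v * p^2 := by positivity
  set t := (36/5) * v * p / L with htdef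
  have ht0 : 0 < t := by
    rw [htdef]
    apply div_pos (by positivity) hL0
  have htV : t < Var := by
    have h1 : t < θ^2 * q / 2 := by
      rw [htdef, div_lt_div_iff₀ hL0 (by norm_num : (0:ℝ) < 2)]
      nlinarith [hcon]
    linarith [hVlow]
  have heqt : t / (v*p^2) = (72/5) * (1/(2*p)) * (1/L) := by
    rw [htdef]
    field_simp
    ring
  have hlog2p : Real.log (2*p) = 2 - L := by rw [hL]; ring
  have hlogval : Real.log (t/(v*p^2)) = L - Real.log L + (Real.log (72/5) - 2) := by
    rw [heqt, Real.log_mul (by positivity : (0:ℝ) < (72:ℝ)/5 * (1/(2*p))).ne'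
        (by positivity : (0:ℝ) < 1/L).ne',
      Real.log_mul (by norm_num : ((72:ℝ)/5) ≠ 0) (by positivity : (0:ℝ) < 1/(2*p)).ne',
      one_div, one_div, Real.log_inv, Real.log_inv, hlog2p]
    ring
  have hlogt1 : (1:ℝ) ≤ Real.log (t/(v*p^2)) := by
    rw [heqt]
    have h288 : (72:ℝ)/25 ≤ (72/5)*(1/(2*p))*(1/L) := by
      rw [show (72:ℝ)/5*(1/(2*p))*(1/L) = 36/(5*(L*p)) by field_simp; ring,
        le_div_iff₀ (by positivity)]
      nlinarith [hLp]
    calc (1:ℝ) = Real.log (Real.exp 1) := (Real.log_exp 1).symm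
      _ ≤ Real.log ((72/5)*(1/(2*p))*(1/L)) := by
          apply Real.log_le_log (Real.exp_pos 1)
          nlinarith [h288, Real.exp_one_lt_d9]
  have hmono := xlogx_mono (c := v*p^2) hvp2 ht0
    (by linarith : -1 ≤ Real.log (t/(v*p^2))) (le_of_lt htV)
  have hchain : t * Real.log (t/(v*p^2)) ≤ v * p := le_trans hmono hkey
  have hfn := final_numeric hL0
  rw [show (14.4:ℝ) = 72/5 by norm_num] at hfn
  rw [show (7.2:ℝ) = 36/5 by norm_num] at hfn
  rw [hlogval, htdef] at hchain
  have h4 : (36/5) * v * p / L * (L - Real.log L + (Real.log (72/5) - 2))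
      = ((36/5) * v * p * (L - Real.log L + (Real.log (72/5) - 2))) / L := by ring
  rw [h4] at hchain
  have h3 : (36/5) * v * p * (L - Real.log L + (Real.log (72/5) - 2)) ≤ v * p * L := by
    have := (div_le_iff₀ hL0).1 hchain
    linarith [this]
  have hvp : 0 < v * p := by positivity
  nlinarith [mul_lt_mul_of_pos_left hfn hvp, h3]

end StmtAux

set_option maxHeartbeats 1000000 in
theorem stmt_6 {n : ℕ} (f : (Fin n → Fin 2) → ℝ) (v : ℝ) (hv : 0 < v)
    (hcond : ∀ x, ∑ i, (max (-(f x - f (flipBit x i))) 0) ^ 2 ≤ v)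
    (B : ℝ)
    (hB : IsGreatest (Set.range fun p : (Fin n → Fin 2) × Fin n =>
      |f p.1 - f (flipBit p.1 p.2)|) B)
    (a b : ℝ) (hab : a < b) (ha : quant f (1 / 2) ≤ a)
    (hb : 0 < prb fun x => b ≤ f x) :
    b - a ≤
      Real.sqrt ((72 / 5) * v * (prb fun x => a - B < f x ∧ f x < b) /
          (prb fun x => b ≤ f x)) *
        (Real.log (Real.exp 2 / (2 * prb fun x => a - B < f x ∧ f x < b))) ^
          (-(1 / 2) : ℝ) := by
  have hab' : a ≤ b := le_of_lt hab
  obtain ⟨pr, hpr⟩ := hB.1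
  have hB0 : 0 ≤ B := by
    rw [← hpr]
    exact abs_nonneg _
  have hBb : ∀ (x : Fin n → Fin 2) (j : Fin n), |f x - f (flipBit x j)| ≤ B := by
    intro x j
    exact hB.2 ⟨⟨x, j⟩, rfl⟩
  have hlow : (1/2:ℝ) ≤ prb (fun x => f x ≤ a) := StmtAux.median_half ha
  have hVlow := StmtAux.var_lower (f := f) hab
  have hq0 : 0 < prb (fun x : Fin n → Fin 2 => b ≤ f x) := hb
  have hθ : 0 < b - a := by linarith
  have hVar0 : 0 < expecb (fun x => (max a (min b (f x)))^2)
      - (expecb (fun x => max a (min b (f x))))^2 := by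
    have h1 : 0 < (b-a)^2 * prb (fun x : Fin n → Fin 2 => b ≤ f x)
        * prb (fun x : Fin n → Fin 2 => f x ≤ a) := by
      apply mul_pos (mul_pos (by positivity) hq0)
      linarith
    linarith [hVlow]
  have hW := StmtAux.W_bound (f := f) (a := a) (b := b) hab' hB0 (le_of_lt hv) hBb hcond
  have hWpos := StmtAux.W_pos (fun y => max a (min b (f y))) hVar0
  have hvp2 : 0 < v * (prb fun x => a - B < f x ∧ f x < b)^2 := lt_of_lt_of_le hWpos hW
  have hp0 : 0 < (prb fun x => a - B < f x ∧ f x < b) := by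
    rcases eq_or_lt_of_le (StmtAux.prb_nonneg (fun x => a - B < f x ∧ f x < b)) with he | h
    · exfalso
      rw [← he] at hvp2
      norm_num at hvp2
    · exact h
  have hp1 : (prb fun x => a - B < f x ∧ f x < b) ≤ 1 := StmtAux.prb_le_one _
  have hFS : (expecb (fun x => (max a (min b (f x)))^2)
        - (expecb (fun x => max a (min b (f x))))^2)
      * Real.log ((expecb (fun x => (max a (min b (f x)))^2)
          - (expecb (fun x => max a (min b (f x))))^2)
        / (v * (prb fun x => a - B < f x ∧ f x < b)^2))
      ≤ (1/2) * ∑ j : Fin n, expecb (fun x =>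
          ((max a (min b (f x))) - (max a (min b (f (flipBit x j)))))^2) :=
    StmtAux.FS_main _ hW hVar0
  have hdir := StmtAux.dirichlet_bound (f := f) hab' hB0 hBb hcond
  have hkey : (expecb (fun x => (max a (min b (f x)))^2)
        - (expecb (fun x => max a (min b (f x))))^2)
      * Real.log ((expecb (fun x => (max a (min b (f x)))^2)
          - (expecb (fun x => max a (min b (f x))))^2)
        / (v * (prb fun x => a - B < f x ∧ f x < b)^2))
      ≤ v * (prb fun x => a - B < f x ∧ f x < b) := by
    linarith [hFS, hdir]
  have hLeq : Real.log (Real.exp 2 / (2 * prb fun x => a - B < f x ∧ f x < b))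
      = 2 - Real.log (2 * (prb fun x => a - B < f x ∧ f x < b)) := by
    rw [Real.log_div (ne_of_gt (Real.exp_pos 2)) (by positivity), Real.log_exp]
  have hVlow2 : (b-a)^2 * (prb fun x : Fin n → Fin 2 => b ≤ f x) * (1/2)
      ≤ expecb (fun x => (max a (min b (f x)))^2)
        - (expecb (fun x => max a (min b (f x))))^2 := by
    have h2 : (b-a)^2 * (prb fun x : Fin n → Fin 2 => b ≤ f x) * (1/2)
        ≤ (b-a)^2 * (prb fun x : Fin n → Fin 2 => b ≤ f x) * prb (fun x => f x ≤ a) := by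
      apply mul_le_mul_of_nonneg_left hlow
      positivity
    linarith [hVlow]
  have hmain := StmtAux.endgame hv hq0 hθ hp0 hp1 hLeq hVlow2 hkey
  set L := Real.log (Real.exp 2 / (2 * prb fun x => a - B < f x ∧ f x < b)) with hLdef
  have hL0 : 0 < L := by
    have hlog2 : Real.log 2 < 0.6931471808 := Real.log_two_lt_d9
    have h2p : Real.log (2 * prb fun x => a - B < f x ∧ f x < b) ≤ Real.log 2 := by
      apply Real.log_le_log (by positivity)
      linarith
    rw [hLeq]
    linarith
  have hsq : ((b-a) * Real.sqrt L)^2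
      ≤ (72/5) * v * (prb fun x => a - B < f x ∧ f x < b)
        / (prb fun x => b ≤ f x) := by
    rw [mul_pow, Real.sq_sqrt (le_of_lt hL0), le_div_iff₀ hq0]
    nlinarith [hmain]
  have h0 : 0 ≤ (b-a) * Real.sqrt L := mul_nonneg (by linarith) (Real.sqrt_nonneg L)
  have hgoal2 : (b-a) * Real.sqrt L
      ≤ Real.sqrt ((72/5) * v * (prb fun x => a - B < f x ∧ f x < b)
          / (prb fun x => b ≤ f x)) := by
    calc (b-a) * Real.sqrt L = Real.sqrt (((b-a) * Real.sqrt L)^2) := (Real.sqrt_sq h0).symm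
      _ ≤ _ := Real.sqrt_le_sqrt hsq
  have hrpow : L ^ (-(1/2 : ℝ)) = 1 / Real.sqrt L := by
    rw [Real.rpow_neg (le_of_lt hL0), ← Real.sqrt_eq_rpow, one_div]
  rw [hrpow, mul_one_div, le_div_iff₀ (Real.sqrt_pos.2 hL0)]
  exact hgoal2
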